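/- arXiv:2503.21882 — 4 statements merged into one kernel-verified Lean document; each statement's English description precedes it below -/
import Mathlib

section
/- Let G be an infinite simple group and let n ≥ 2. Then the action of Aut_G(G ∗ F_n) on Hom_G(G ∗ F_n, G) by precomposition is highly transitive: for every k ≥ 1 and any two injective k-tuples (φ_1, …, φ_k) and (ψ_1, …, ψ_k) of elements of Hom_G(G ∗ F_n, G), there is a G-automorphism α of G ∗ F_n with φ_i ∘ α = ψ_i for all i. -/
private lemma abel_aux {G : Type*} [Group G] [Infinite G] (hs : IsSimpleGroup G)
    (hcomm : ∀ a b : G, a * b = b * a) : False := by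
  have hnorm : ∀ g : G, (Subgroup.zpowers g).Normal := fun g =>
    ⟨fun x hx h => by
      rw [hcomm h x, mul_assoc, mul_inv_cancel, mul_one]; exact hx⟩
  have htop : ∀ g : G, g ≠ 1 → Subgroup.zpowers g = ⊤ := fun g hg => by
    rcases (hnorm g).eq_bot_or_eq_top with h | h
    · exact absurd (Subgroup.zpowers_eq_bot.mp h) hg
    · exact h
  have hfin : ∀ x : G, x ≠ 1 → IsOfFinOrder x → False := by
    intro x hx hord
    have h1 : ((Subgroup.zpowers x : Subgroup G) : Set G).Finite := hord.finite_zpowers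
    rw [htop x hx] at h1
    simp only [Subgroup.coe_top] at h1
    exact Set.infinite_univ h1
  by_cases hsq : ∀ x : G, x * x = 1
  · obtain ⟨g, hg⟩ := exists_ne (1 : G)
    exact hfin g hg (isOfFinOrder_iff_pow_eq_one.mpr ⟨2, two_pos, by rw [pow_two]; exact hsq g⟩)
  · push_neg at hsq
    obtain ⟨x, hx⟩ := hsq
    have hxne : x ≠ 1 := fun h => hx (by rw [h, one_mul])
    have hmem : x ∈ Subgroup.zpowers (x * x) := by
      rw [htop _ hx]; exact Subgroup.mem_top x
    obtain ⟨n, hn⟩ := Subgroup.mem_zpowers_iff.mp hmem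
    have hxx : x * x = x ^ (2 : ℤ) := by rw [zpow_two]
    have h2 : x ^ (2 * n - 1) = 1 := by
      rw [zpow_sub, zpow_mul, ← hxx, hn, zpow_one, mul_inv_cancel]
    refine hfin x hxne (isOfFinOrder_iff_zpow_eq_one.mpr ⟨2 * n - 1, ?_, h2⟩)
    omega

open Classical in
private lemma claimC {G : Type*} [Group G] [Infinite G] (hs : IsSimpleGroup G) (m : ℕ)
    (ih : ∀ (H : Subgroup (Fin m → G)), (∀ g : G, (fun _ => g) ∈ H) →
      ∀ t : Fin m → G, (∀ s s' : Fin m, (∀ h ∈ H, h s = h s') → t s = t s') → t ∈ H)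
    (H : Subgroup (Fin (m+1) → G)) (hc : ∀ g : G, (fun _ => g) ∈ H)
    (hN : ∀ g : G, (fun i : Fin (m+1) => if i = Fin.last m then g else 1) ∈ H → g = 1) :
    ∃ i : Fin m, ∀ h ∈ H, h (Fin.last m) = h i.castSucc := by
  haveI := hs
  set πh : (Fin (m+1) → G) →* (Fin m → G) :=
    MonoidHom.mk' (fun a i => a i.castSucc) (fun a b => rfl) with hπh
  set D : Subgroup (Fin m → G) := H.map πh with hD
  have hDconst : ∀ g : G, (fun _ => g) ∈ D := fun g => ⟨fun _ => g, hc g, rfl⟩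
  have hu : ∀ a b : Fin (m+1) → G, a ∈ H → b ∈ H →
      (∀ i : Fin m, a i.castSucc = b i.castSucc) → a (Fin.last m) = b (Fin.last m) := by
    intro a b ha hb hab
    have hm : a⁻¹ * b ∈ H := mul_mem (inv_mem ha) hb
    have he : (a⁻¹ * b) = (fun i : Fin (m+1) =>
        if i = Fin.last m then (a⁻¹ * b) (Fin.last m) else 1) := by
      funext i
      refine Fin.lastCases ?_ ?_ i
      · rw [if_pos rfl]
      · intro j
        rw [if_neg (Fin.castSucc_lt_last j).ne]
        show (a j.castSucc)⁻¹ * b j.castSucc = 1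
        rw [hab j, inv_mul_cancel]
    have h2 : (a (Fin.last m))⁻¹ * b (Fin.last m) = 1 := hN _ (he ▸ hm)
    rw [← inv_mul_eq_one, h2]
  have hch : ∀ u : Fin m → G, ∃ a : Fin (m+1) → G,
      u ∈ D → (a ∈ H ∧ ∀ i : Fin m, a i.castSucc = u i) := by
    intro u
    by_cases h : u ∈ D
    · obtain ⟨a, haH, haR⟩ := h
      exact ⟨a, fun _ => ⟨haH, fun i => congrFun haR i⟩⟩
    · exact ⟨1, fun hu' => absurd hu' h⟩
  choose A hA using hch
  set F : (Fin m → G) → G := fun u => A u (Fin.last m) with hF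
  have Fval : ∀ b : Fin (m+1) → G, b ∈ H → F (fun i => b i.castSucc) = b (Fin.last m) := by
    intro b hb
    have hmem : (fun i : Fin m => b i.castSucc) ∈ D := ⟨b, hb, rfl⟩
    exact hu _ b (hA _ hmem).1 hb (fun i => ((hA _ hmem).2 i))
  have Fconst : ∀ g : G, F (fun _ => g) = g := fun g => Fval (fun _ => g) (hc g)
  have Fmul : ∀ u v : Fin m → G, u ∈ D → v ∈ D → F (u * v) = F u * F v := by
    intro u v huD hvD
    have h1 := hA u huD
    have h2 := hA v hvD
    have hm : A u * A v ∈ H := mul_mem h1.1 h2.1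
    have hmem : u * v ∈ D := mul_mem huD hvD
    exact hu (A (u*v)) (A u * A v) (hA _ hmem).1 hm (fun i => by
      show A (u*v) i.castSucc = A u i.castSucc * A v i.castSucc
      rw [(hA _ hmem).2 i, h1.2 i, h2.2 i]; rfl)
  set Rel : Fin m → Fin m → Prop := fun i j => ∀ d ∈ D, d i = d j with hRel
  have hrefl : ∀ i, Rel i i := fun i d _ => rfl
  have hsymm : ∀ i j, Rel i j → Rel j i := fun i j h d hd => (h d hd).symm
  have htrans : ∀ i j l, Rel i j → Rel j l → Rel i l := fun i j l h1 h2 d hd =>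
    (h1 d hd).trans (h2 d hd)
  have hne : ∀ i : Fin m, (Finset.univ.filter (fun j => Rel i j)).Nonempty :=
    fun i => ⟨i, Finset.mem_filter.mpr ⟨Finset.mem_univ i, hrefl i⟩⟩
  set rep : Fin m → Fin m := fun i => (Finset.univ.filter (fun j => Rel i j)).min' (hne i)
    with hrepdef
  have hrep1 : ∀ i, Rel i (rep i) := fun i =>
    (Finset.mem_filter.mp ((Finset.univ.filter (fun j => Rel i j)).min'_mem (hne i))).2
  have hrep2 : ∀ i j, Rel i j → rep i = rep j := by
    intro i j hij
    have heq : (Finset.univ.filter (fun l => Rel i l))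
        = (Finset.univ.filter (fun l => Rel j l)) := by
      apply Finset.filter_congr
      intro l _
      exact ⟨fun h => htrans _ _ _ (hsymm _ _ hij) h, fun h => htrans _ _ _ hij h⟩
    show (Finset.univ.filter (fun l => Rel i l)).min' (hne i)
      = (Finset.univ.filter (fun l => Rel j l)).min' (hne j)
    congr 1
  have hrep3 : ∀ i, rep (rep i) = rep i := fun i => (hrep2 _ _ (hrep1 i)).symm
  set blk : Fin m → G → (Fin m → G) := fun i g => fun j => if Rel j i then g else 1 with hblk
  have hblkD : ∀ i g, blk i g ∈ D := by
    intro i g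
    apply ih D hDconst
    intro s s' hss'
    have hrel : Rel s s' := hss'
    show (if Rel s i then g else 1) = (if Rel s' i then g else 1)
    by_cases h : Rel s i
    · rw [if_pos h, if_pos (htrans _ _ _ (hsymm _ _ hrel) h)]
    · rw [if_neg h, if_neg (fun h' => h (htrans _ _ _ hrel h'))]
  set χ : Fin m → G → G := fun i g => F (blk i g) with hχ
  have hχmul : ∀ i (g h : G), χ i (g * h) = χ i g * χ i h := by
    intro i g h
    show F (blk i (g*h)) = F (blk i g) * F (blk i h)
    have hbm : blk i (g * h) = blk i g * blk i h := by
      funext j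
      show (if Rel j i then g * h else 1)
        = (if Rel j i then g else 1) * (if Rel j i then h else 1)
      by_cases hj : Rel j i
      · rw [if_pos hj, if_pos hj, if_pos hj]
      · rw [if_neg hj, if_neg hj, if_neg hj, one_mul]
    rw [hbm, Fmul _ _ (hblkD i g) (hblkD i h)]
  set χhom : Fin m → (G →* G) := fun i => MonoidHom.mk' (χ i) (hχmul i) with hχhom
  set K : Fin m → Subgroup G := fun i => (χhom i).range with hK
  have hKnorm : ∀ i, (K i).Normal := by
    intro i
    constructor
    intro x hx h
    obtain ⟨g, rfl⟩ := hx
    refine ⟨h * g * h⁻¹, ?_⟩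
    show F (blk i (h * g * h⁻¹)) = h * F (blk i g) * h⁻¹
    have h1 : blk i (h * g * h⁻¹) = (fun _ => h) * blk i g * (fun _ => h⁻¹) := by
      funext j
      show (if Rel j i then h * g * h⁻¹ else 1) = h * (if Rel j i then g else 1) * h⁻¹
      by_cases hj : Rel j i
      · rw [if_pos hj, if_pos hj]
      · rw [if_neg hj, if_neg hj, mul_one, mul_inv_cancel]
    rw [h1, Fmul _ _ (mul_mem (hDconst h) (hblkD i g)) (hDconst h⁻¹),
        Fmul _ _ (hDconst h) (hblkD i g), Fconst, Fconst]
  set R : Finset (Fin m) := Finset.univ.image rep with hR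
  have hRrep : ∀ r ∈ R, rep r = r := by
    intro r hr
    obtain ⟨i, _, rfl⟩ := Finset.mem_image.mp hr
    exact hrep3 i
  have hrepR : ∀ j : Fin m, rep j ∈ R := fun j =>
    Finset.mem_image.mpr ⟨j, Finset.mem_univ j, rfl⟩
  -- splitting off one class
  have hsplitD : ∀ (r : Fin m) (u : Fin m → G), u ∈ D →
      (fun j => if Rel j r then (1:G) else u j) ∈ D := by
    intro r u huD
    apply ih D hDconst
    intro s s' hss'
    have hrel : Rel s s' := hss'
    show (if Rel s r then 1 else u s) = (if Rel s' r then 1 else u s')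
    by_cases h : Rel s r
    · rw [if_pos h, if_pos (htrans _ _ _ (hsymm _ _ hrel) h)]
    · rw [if_neg h, if_neg (fun h' => h (htrans _ _ _ hrel h')), hrel u huD]
  have hsplit : ∀ (r : Fin m) (u : Fin m → G), u ∈ D →
      F u = χ r (u r) * F (fun j => if Rel j r then 1 else u j) := by
    intro r u huD
    have hw := hsplitD r u huD
    have hv := hblkD r (u r)
    have huvw : u = blk r (u r) * (fun j => if Rel j r then 1 else u j) := by
      funext j
      show u j = (if Rel j r then u r else 1) * (if Rel j r then 1 else u j)
      by_cases hj : Rel j r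
      · rw [if_pos hj, if_pos hj, mul_one]; exact hj u huD
      · rw [if_neg hj, if_neg hj, one_mul]
    conv_lhs => rw [huvw]
    rw [Fmul _ _ hv hw]
  have hvanish : ∀ (S : Finset (Fin m)), ∀ u : Fin m → G, u ∈ D →
      (∀ j : Fin m, u j ≠ 1 → rep j ∈ S) → (∀ r ∈ S, ∀ g : G, χ r g = 1) → F u = 1 := by
    intro S
    induction S using Finset.induction_on with
    | empty =>
      intro u huD hsupp _
      have hu1 : u = fun _ => 1 := funext fun j => by
        by_contra h
        exact absurd (hsupp j h) (Finset.notMem_empty _)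
      rw [hu1]; exact Fconst 1
    | @insert a S hnot ih2 =>
      intro u huD hsupp hbotS
      rw [hsplit a u huD, hbotS a (Finset.mem_insert_self a S) (u a), one_mul]
      apply ih2 _ (hsplitD a u huD)
      · intro j hj
        by_cases hja : Rel j a
        · exact absurd (if_pos hja) hj
        · have hj' : u j ≠ 1 := by rwa [if_neg hja] at hj
          rcases Finset.mem_insert.mp (hsupp j hj') with h | h
          · exact absurd (h ▸ hrep1 j) hja
          · exact h
      · intro r hr
        exact hbotS r (Finset.mem_insert_of_mem hr)
  by_cases hex : ∃ r ∈ R, K r = ⊤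
  · obtain ⟨r0, hr0, htp⟩ := hex
    have hbot : ∀ r ∈ R, r ≠ r0 → ∀ g : G, χ r g = 1 := by
      intro r hr hne' g
      rcases (hKnorm r).eq_bot_or_eq_top with hb | ht
      · have : χhom r g ∈ K r := ⟨g, rfl⟩
        rw [hb] at this
        exact Subgroup.mem_bot.mp this
      · exfalso
        apply abel_aux hs
        intro x y
        have hx : x ∈ K r := ht ▸ Subgroup.mem_top x
        have hy : y ∈ K r0 := htp ▸ Subgroup.mem_top y
        obtain ⟨gx, hgx⟩ := hx
        obtain ⟨gy, hgy⟩ := hy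
        have hdisj : blk r gx * blk r0 gy = blk r0 gy * blk r gx := by
          funext j
          show (if Rel j r then gx else 1) * (if Rel j r0 then gy else 1)
            = (if Rel j r0 then gy else 1) * (if Rel j r then gx else 1)
          by_cases h1 : Rel j r
          · have h2 : ¬ Rel j r0 := by
              intro h2
              apply hne'
              rw [← hRrep r hr, ← hRrep r0 hr0, ← hrep2 j r h1, hrep2 j r0 h2]
            rw [if_pos h1, if_neg h2, mul_one, one_mul]
          · rw [if_neg h1, one_mul, mul_one]
        have hcm : χ r gx * χ r0 gy = χ r0 gy * χ r gx := by
          show F (blk r gx) * F (blk r0 gy) = F (blk r0 gy) * F (blk r gx)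
          rw [← Fmul _ _ (hblkD r gx) (hblkD r0 gy), ← Fmul _ _ (hblkD r0 gy) (hblkD r gx),
            hdisj]
        rw [← hgx, ← hgy]
        exact hcm
    have hvan : ∀ u : Fin m → G, u ∈ D → F (fun j => if Rel j r0 then 1 else u j) = 1 := by
      intro u huD
      apply hvanish (R.erase r0) _ (hsplitD r0 u huD)
      · intro j hj
        by_cases hja : Rel j r0
        · exact absurd (if_pos hja) hj
        · refine Finset.mem_erase.mpr ⟨?_, hrepR j⟩
          intro h
          exact hja (h ▸ hrep1 j)
      · intro r hr g
        exact hbot r (Finset.mem_of_mem_erase hr) (Finset.ne_of_mem_erase hr) g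
    have hid : ∀ g : G, χ r0 g = g := by
      intro g
      have h1 := hsplit r0 (fun _ => g) (hDconst g)
      rw [Fconst, hvan _ (hDconst g), mul_one] at h1
      exact h1.symm
    refine ⟨r0, fun h hH => ?_⟩
    have hπD : (fun i : Fin m => h i.castSucc) ∈ D := ⟨h, hH, rfl⟩
    have h1 : h (Fin.last m) = F (fun i => h i.castSucc) := (Fval h hH).symm
    rw [h1, hsplit r0 _ hπD, hvan _ hπD, mul_one, hid]
  · exfalso
    push_neg at hex
    have hallbot : ∀ r ∈ R, ∀ g : G, χ r g = 1 := by
      intro r hr g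
      have hb := ((hKnorm r).eq_bot_or_eq_top).resolve_right (hex r hr)
      have : χhom r g ∈ K r := ⟨g, rfl⟩
      rw [hb] at this
      exact Subgroup.mem_bot.mp this
    obtain ⟨g, hg⟩ := exists_ne (1 : G)
    apply hg
    rw [← Fconst g]
    exact hvanish R _ (hDconst g) (fun j _ => hrepR j) hallbot

private lemma core {G : Type*} [Group G] [Infinite G] (hs : IsSimpleGroup G) :
    ∀ (m : ℕ) (H : Subgroup (Fin m → G)), (∀ g : G, (fun _ => g) ∈ H) →
      ∀ t : Fin m → G, (∀ s s' : Fin m, (∀ h ∈ H, h s = h s') → t s = t s') → t ∈ H := by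
  intro m
  induction m with
  | zero =>
    intro H hc t ht
    have h1 : t = 1 := funext (fun i => i.elim0)
    rw [h1]; exact one_mem H
  | succ m ih =>
    intro H hc t ht
    haveI := hs
    set πh : (Fin (m+1) → G) →* (Fin m → G) :=
      MonoidHom.mk' (fun a i => a i.castSucc) (fun a b => rfl) with hπh
    have hres : (fun i : Fin m => t i.castSucc) ∈ H.map πh := by
      apply ih (H.map πh) (fun g => ⟨fun _ => g, hc g, rfl⟩)
      intro s s' hss'
      exact ht _ _ (fun h hH => hss' _ ⟨h, hH, rfl⟩)
    obtain ⟨a, haH, haR⟩ := hres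
    set N : Subgroup G :=
      { carrier := {g : G | (fun i : Fin (m+1) => if i = Fin.last m then g else 1) ∈ H}
        one_mem' := by
          show (fun i : Fin (m+1) => if i = Fin.last m then (1:G) else 1) ∈ H
          have h1 : (fun i : Fin (m+1) => if i = Fin.last m then (1:G) else 1)
              = (fun _ => 1) := funext fun i => by split <;> rfl
          rw [h1]; exact hc 1
        mul_mem' := by
          intro x y hx hy
          show (fun i : Fin (m+1) => if i = Fin.last m then x * y else 1) ∈ H
          have h1 : (fun i : Fin (m+1) => if i = Fin.last m then x * y else 1)
              = (fun i => if i = Fin.last m then x else 1) *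
                (fun i => if i = Fin.last m then y else 1) := by
            funext i
            show _ = (if i = Fin.last m then x else 1) * (if i = Fin.last m then y else 1)
            split
            · rfl
            · rw [one_mul]
          rw [h1]; exact mul_mem hx hy
        inv_mem' := by
          intro x hx
          show (fun i : Fin (m+1) => if i = Fin.last m then x⁻¹ else 1) ∈ H
          have h1 : (fun i : Fin (m+1) => if i = Fin.last m then x⁻¹ else 1)
              = (fun i => if i = Fin.last m then x else 1)⁻¹ := by
            funext i
            show _ = (if i = Fin.last m then x else 1)⁻¹
            split
            · rfl
            · rw [inv_one]
          rw [h1]; exact inv_mem hx } with hNdef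
    have hNnorm : N.Normal := by
      constructor
      intro g hg h
      show (fun i : Fin (m+1) => if i = Fin.last m then h * g * h⁻¹ else 1) ∈ H
      have h1 : (fun i : Fin (m+1) => if i = Fin.last m then h * g * h⁻¹ else 1)
          = (fun _ => h) * (fun i => if i = Fin.last m then g else 1) * (fun _ => h⁻¹) := by
        funext i
        show _ = h * (if i = Fin.last m then g else 1) * h⁻¹
        split
        · rfl
        · rw [mul_one, mul_inv_cancel]
      rw [h1]
      exact mul_mem (mul_mem (hc h) hg) (hc h⁻¹)
    rcases hNnorm.eq_bot_or_eq_top with hbot | htop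
    · obtain ⟨i, hi⟩ := claimC hs m ih H hc (fun g hg => by
        have hgN : g ∈ N := hg
        rw [hbot] at hgN
        exact Subgroup.mem_bot.mp hgN)
      have h1 : a (Fin.last m) = t (Fin.last m) := by
        rw [hi a haH]
        have h2 : a i.castSucc = t i.castSucc := congrFun haR i
        rw [h2]
        exact (ht (Fin.last m) i.castSucc (fun h hH => hi h hH)).symm
      have h3 : t = a := by
        funext j
        refine Fin.lastCases h1.symm (fun i' => (congrFun haR i').symm) j
      rw [h3]; exact haH
    · set g0 : G := (a (Fin.last m))⁻¹ * t (Fin.last m) with hg0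
      have hgel : (fun i : Fin (m+1) => if i = Fin.last m then g0 else 1) ∈ H := by
        have : g0 ∈ N := htop ▸ Subgroup.mem_top g0
        exact this
      have h3 : t = a * (fun i : Fin (m+1) => if i = Fin.last m then g0 else 1) := by
        funext j
        refine Fin.lastCases ?_ ?_ j
        · show t (Fin.last m) = a (Fin.last m) * (if Fin.last m = Fin.last m then g0 else 1)
          rw [if_pos rfl, hg0, mul_inv_cancel_left]
        · intro i'
          show t i'.castSucc = a i'.castSucc * (if i'.castSucc = Fin.last m then g0 else 1)
          rw [if_neg (Fin.castSucc_lt_last i').ne, mul_one]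
          exact (congrFun haR i').symm
      rw [h3]
      exact mul_mem haH hgel

/-- The subgroup `Aut_G(G ∗ F_n)` of `G`-automorphisms of `G ∗ F_n`, i.e.
automorphisms restricting to the identity on (the canonical copy of) `G`. -/
def gAut (G : Type*) [Group G] (n : ℕ) :
    Subgroup (MulAut (Monoid.Coprod G (FreeGroup (Fin n)))) where
  carrier := {α | ∀ g : G, α (Monoid.Coprod.inl g) = Monoid.Coprod.inl g}
  one_mem' := fun _ => rfl
  mul_mem' := fun {a b} ha hb g => by
    simp only [Set.mem_setOf_eq] at ha hb
    show a (b _) = _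
    rw [hb g, ha g]
  inv_mem' := fun {a} ha g => by
    simp only [Set.mem_setOf_eq] at ha
    show a⁻¹ _ = _
    conv_lhs => rw [← ha g]
    exact a.symm_apply_apply _

/-- The set `Hom_G(G ∗ F_n, G)` of `G`-homomorphisms `G ∗ F_n → G`, i.e.
homomorphisms restricting to the identity on `G`. -/
def GHom (G : Type*) [Group G] (n : ℕ) :=
  {φ : Monoid.Coprod G (FreeGroup (Fin n)) →* G // ∀ g : G, φ (Monoid.Coprod.inl g) = g}


section Layer

variable {G : Type*} [Group G] {n : ℕ}

open Monoid

/-- The `G`-homomorphism determined by a tuple of images of the generators. -/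
private def mkHom (f : Fin n → G) : GHom G n :=
  ⟨Coprod.lift (MonoidHom.id G) (FreeGroup.lift f), fun g => by
    simp [Monoid.Coprod.lift_apply_inl]⟩

private lemma mkHom_x (f : Fin n → G) (i : Fin n) :
    (mkHom f).1 (Coprod.inr (FreeGroup.of i)) = f i := by
  simp [mkHom, Monoid.Coprod.lift_apply_inr]

private lemma ghom_ext {φ ψ : GHom G n}
    (h : ∀ i : Fin n, φ.1 (Coprod.inr (FreeGroup.of i)) = ψ.1 (Coprod.inr (FreeGroup.of i))) :
    φ = ψ := by
  apply Subtype.ext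
  apply Monoid.Coprod.hom_ext
  · ext g
    simp only [MonoidHom.comp_apply]
    rw [φ.2 g, ψ.2 g]
  · apply FreeGroup.ext_hom
    intro i
    simpa using h i

private lemma mkHom_toT (φ : GHom G n) :
    mkHom (fun i => φ.1 (Coprod.inr (FreeGroup.of i))) = φ :=
  ghom_ext (fun i => mkHom_x _ i)

/-- Evaluation of a word in the free product of `G` with the free group missing
the `i`-th generator. -/
private def evA (i : Fin n) (f : Fin n → G) :
    Monoid.Coprod G (FreeGroup {l : Fin n // l ≠ i}) →* G :=
  Coprod.lift (MonoidHom.id G) (FreeGroup.lift (fun l => f l.1))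

/-- Embedding of words missing the `i`-th generator. -/
private def embA (i : Fin n) :
    Monoid.Coprod G (FreeGroup {l : Fin n // l ≠ i}) →* Monoid.Coprod G (FreeGroup (Fin n)) :=
  Coprod.lift Coprod.inl (FreeGroup.lift (fun l => Coprod.inr (FreeGroup.of l.1)))

private def ePlus (i : Fin n) (v : Monoid.Coprod G (FreeGroup {l : Fin n // l ≠ i})) :
    Monoid.Coprod G (FreeGroup (Fin n)) →* Monoid.Coprod G (FreeGroup (Fin n)) :=
  Coprod.lift Coprod.inl (FreeGroup.lift (fun j =>
    if j = i then Coprod.inr (FreeGroup.of j) * embA i v else Coprod.inr (FreeGroup.of j)))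

private lemma ePlus_x (i : Fin n) (v : Monoid.Coprod G (FreeGroup {l : Fin n // l ≠ i}))
    (j : Fin n) :
    ePlus i v (Coprod.inr (FreeGroup.of j))
      = if j = i then Coprod.inr (FreeGroup.of j) * embA i v else Coprod.inr (FreeGroup.of j) := by
  simp only [ePlus]
  rw [Monoid.Coprod.lift_apply_inr, FreeGroup.lift_apply_of]

private lemma ePlus_emb (i : Fin n) (v w : Monoid.Coprod G (FreeGroup {l : Fin n // l ≠ i})) :
    ePlus i v (embA i w) = embA i w := by
  have h : (ePlus i v).comp (embA i) = embA i := by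
    apply Monoid.Coprod.hom_ext
    · ext g
      simp [ePlus, embA, Monoid.Coprod.lift_apply_inl]
    · apply FreeGroup.ext_hom
      intro l
      simp only [MonoidHom.comp_apply, embA]
      rw [Monoid.Coprod.lift_apply_inr, FreeGroup.lift_apply_of]
      rw [ePlus_x, if_neg l.2]
  exact congrFun (congrArg DFunLike.coe h) w

private lemma ePlus_comp (i : Fin n) (v : Monoid.Coprod G (FreeGroup {l : Fin n // l ≠ i})) :
    (ePlus i v).comp (ePlus i v⁻¹) = MonoidHom.id _ := by
  apply Monoid.Coprod.hom_ext
  · ext g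
    simp [ePlus, Monoid.Coprod.lift_apply_inl]
  · apply FreeGroup.ext_hom
    intro j
    simp only [MonoidHom.comp_apply, MonoidHom.id_apply]
    rw [ePlus_x]
    by_cases hj : j = i
    · rw [if_pos hj]
      simp only [map_mul, map_inv]
      rw [ePlus_x, if_pos hj, ePlus_emb]
      group
    · rw [if_neg hj, ePlus_x, if_neg hj]

/-- The elementary `G`-automorphism sending `x_i` to `x_i ⬝ v`. -/
private def elemAut (i : Fin n) (v : Monoid.Coprod G (FreeGroup {l : Fin n // l ≠ i})) :
    MulAut (Monoid.Coprod G (FreeGroup (Fin n))) :=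
  MonoidHom.toMulEquiv (ePlus i v) (ePlus i v⁻¹)
    (by simpa using ePlus_comp i v⁻¹) (ePlus_comp i v)

private lemma elemAut_mem (i : Fin n) (v : Monoid.Coprod G (FreeGroup {l : Fin n // l ≠ i})) :
    elemAut i v ∈ gAut G n := by
  intro g
  show ePlus i v (Coprod.inl g) = Coprod.inl g
  simp [ePlus, Monoid.Coprod.lift_apply_inl]

private lemma mkHom_comp_elemAut (f : Fin n → G) (i : Fin n)
    (v : Monoid.Coprod G (FreeGroup {l : Fin n // l ≠ i})) :
    (mkHom f).1.comp (elemAut i v).toMonoidHom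
      = (mkHom (Function.update f i (f i * evA i f v))).1 := by
  have hev : (mkHom f).1.comp (embA i) = evA i f := by
    apply Monoid.Coprod.hom_ext
    · ext g
      simp [mkHom, embA, evA, Monoid.Coprod.lift_apply_inl]
    · apply FreeGroup.ext_hom
      intro l
      simp only [MonoidHom.comp_apply, embA, evA]
      rw [Monoid.Coprod.lift_apply_inr, FreeGroup.lift_apply_of,
        Monoid.Coprod.lift_apply_inr, FreeGroup.lift_apply_of]
      exact mkHom_x f l.1
  apply Monoid.Coprod.hom_ext
  · ext g
    simp only [MonoidHom.comp_apply]
    show (mkHom f).1 (ePlus i v (Coprod.inl g)) = (mkHom (Function.update f i (f i * evA i f v))).1 (Coprod.inl g)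
    rw [show ePlus i v (Coprod.inl g) = Coprod.inl g from by
      simp [ePlus, Monoid.Coprod.lift_apply_inl]]
    rw [(mkHom f).2 g, (mkHom _).2 g]
  · apply FreeGroup.ext_hom
    intro j
    simp only [MonoidHom.comp_apply]
    show (mkHom f).1 (ePlus i v (Coprod.inr (FreeGroup.of j))) = _
    rw [ePlus_x]
    by_cases hj : j = i
    · rw [if_pos hj, map_mul, mkHom_x]
      rw [show (mkHom f).1 (embA i v) = evA i f v from congrFun (congrArg DFunLike.coe hev) v]
      rw [mkHom_x]
      subst hj
      rw [Function.update_self]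
    · rw [if_neg hj, mkHom_x, mkHom_x, Function.update_of_ne hj]

end Layer

section Reach

variable {G : Type*} [Group G] {n k : ℕ}

open Monoid

private def GReach (P Q : Fin k → GHom G n) : Prop :=
  ∃ α ∈ gAut G n, ∀ s : Fin k, (P s).1.comp α.toMonoidHom = (Q s).1

private lemma greach_refl (P : Fin k → GHom G n) : GReach P P :=
  ⟨1, one_mem _, fun s => MonoidHom.ext fun x => rfl⟩

private lemma greach_symm {P Q : Fin k → GHom G n} (h : GReach P Q) : GReach Q P := by
  obtain ⟨α, hα, h⟩ := h
  refine ⟨α⁻¹, inv_mem hα, fun s => MonoidHom.ext fun x => ?_⟩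
  have h1 : (Q s).1 (α⁻¹ x) = (P s).1 (α (α⁻¹ x)) :=
    (congrFun (congrArg DFunLike.coe (h s)) (α⁻¹ x)).symm
  show (Q s).1 (α⁻¹ x) = (P s).1 x
  rw [h1]
  congr 1
  exact α.apply_symm_apply x

private lemma greach_trans {P Q R : Fin k → GHom G n} (h1 : GReach P Q) (h2 : GReach Q R) :
    GReach P R := by
  obtain ⟨α, hα, h1⟩ := h1
  obtain ⟨β, hβ, h2⟩ := h2
  refine ⟨α * β, mul_mem hα hβ, fun s => MonoidHom.ext fun x => ?_⟩
  show (P s).1 (α (β x)) = (R s).1 x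
  calc (P s).1 (α (β x)) = (Q s).1 (β x) := congrFun (congrArg DFunLike.coe (h1 s)) (β x)
    _ = (R s).1 x := congrFun (congrArg DFunLike.coe (h2 s)) x

private lemma movable {G : Type*} [Group G] [Infinite G] (hs : IsSimpleGroup G) {n k : ℕ}
    (i : Fin n) (P : Fin k → Fin n → G) (c : Fin k → G)
    (hcompat : ∀ s t : Fin k, (∀ l : Fin n, l ≠ i → P s l = P t l) →
      (P s i)⁻¹ * c s = (P t i)⁻¹ * c t) :
    GReach (fun s => mkHom (P s)) (fun s => mkHom (Function.update (P s) i (c s))) := by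
  set E : Monoid.Coprod G (FreeGroup {l : Fin n // l ≠ i}) →* (Fin k → G) :=
    Coprod.lift (MonoidHom.mk' (fun g (_ : Fin k) => g) (fun a b => rfl))
      (FreeGroup.lift (fun l => fun s => P s l.1)) with hE
  have hconst : ∀ g : G, (fun _ : Fin k => g) ∈ E.range := fun g =>
    ⟨Coprod.inl g, by rw [hE, Monoid.Coprod.lift_apply_inl]; rfl⟩
  have hgen : ∀ (l : Fin n) (hl : l ≠ i), (fun s => P s l) ∈ E.range := fun l hl =>
    ⟨Coprod.inr (FreeGroup.of ⟨l, hl⟩), by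
      rw [hE, Monoid.Coprod.lift_apply_inr, FreeGroup.lift_apply_of]⟩
  have htmem : (fun s => (P s i)⁻¹ * c s) ∈ E.range := by
    apply core hs k E.range hconst
    intro s s' hss'
    apply hcompat
    intro l hl
    obtain ⟨w, hw⟩ := hgen l hl
    have := hss' _ ⟨w, rfl⟩
    rw [hw] at this
    exact this
  obtain ⟨v, hv⟩ := htmem
  have hval : ∀ s : Fin k, evA i (P s) v = (P s i)⁻¹ * c s := by
    intro s
    have hcomp : (Pi.evalMonoidHom (fun _ : Fin k => G) s).comp E = evA i (P s) := by
      apply Monoid.Coprod.hom_ext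
      · ext g
        simp only [MonoidHom.comp_apply, hE, evA]
        rw [Monoid.Coprod.lift_apply_inl, Monoid.Coprod.lift_apply_inl]
        rfl
      · apply FreeGroup.ext_hom
        intro l
        simp only [MonoidHom.comp_apply, hE, evA]
        rw [Monoid.Coprod.lift_apply_inr, FreeGroup.lift_apply_of,
          Monoid.Coprod.lift_apply_inr, FreeGroup.lift_apply_of]
        rfl
    have h1 : evA i (P s) v = (Pi.evalMonoidHom (fun _ : Fin k => G) s) (E v) :=
      (congrFun (congrArg DFunLike.coe hcomp) v).symm
    rw [h1, hv]
    rfl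
  refine ⟨elemAut i v, elemAut_mem i v, fun s => ?_⟩
  rw [mkHom_comp_elemAut (P s) i v]
  congr 1
  rw [hval s, mul_inv_cancel_left]

open Classical in
private lemma greedy {G : Type*} [Group G] [Infinite G] {k : ℕ} (b : Fin k → G)
    (rep : Fin k → Fin k)
    (hb : ∀ s t : Fin k, rep s = rep t → s ≠ t → b s ≠ b t) :
    ∃ D : Fin k → G, Function.Injective (fun s => b s * D (rep s)) := by
  suffices h : ∀ R : Finset (Fin k), ∃ D : Fin k → G,
      ∀ s t : Fin k, rep s ∈ R → rep t ∈ R → s ≠ t →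
        b s * D (rep s) ≠ b t * D (rep t) by
    obtain ⟨D, hD⟩ := h Finset.univ
    refine ⟨D, fun s t hst => ?_⟩
    by_contra hne
    exact hD s t (Finset.mem_univ _) (Finset.mem_univ _) hne hst
  intro R
  induction R using Finset.induction_on with
  | empty => exact ⟨fun _ => 1, fun s t hs => absurd hs (Finset.notMem_empty _)⟩
  | @insert r R hnot ihR =>
    obtain ⟨D, hD⟩ := ihR
    obtain ⟨g, hg⟩ := Infinite.exists_notMem_finset
      ((Finset.univ : Finset (Fin k × Fin k)).image
        (fun st => (b st.1)⁻¹ * (b st.2 * D (rep st.2))))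
    refine ⟨Function.update D r g, ?_⟩
    intro s t hs ht hst
    have hDr : ∀ u : Fin k, rep u ∈ R → Function.update D r g (rep u) = D (rep u) := by
      intro u hu
      exact Function.update_of_ne (fun (h : rep u = r) => hnot (by rw [← h]; exact hu)) g D
    have hbad : ∀ u w : Fin k, rep u = r → rep w ∈ R →
        b u * Function.update D r g (rep u) ≠ b w * Function.update D r g (rep w) := by
      intro u w hu hw
      rw [hu, Function.update_self, hDr w hw]
      intro hcontr
      apply hg
      apply Finset.mem_image.mpr
      refine ⟨(u, w), Finset.mem_univ _, ?_⟩
      simp only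
      rw [← hcontr, inv_mul_cancel_left]
    rcases Finset.mem_insert.mp hs with hsr | hsR <;>
      rcases Finset.mem_insert.mp ht with htr | htR
    · rw [hsr, htr, Function.update_self]
      intro hcontr
      exact hb s t (hsr.trans htr.symm) hst (mul_right_cancel hcontr)
    · exact hbad s t hsr htR
    · exact fun hcontr => hbad t s htr hsR hcontr.symm
    · rw [hDr s hsR, hDr t htR]
      exact hD s t hsR htR hst

end Reach

section Endgame

variable {G : Type*} [Group G] [Infinite G] {n k : ℕ}

open Monoid

open Classical in
private lemma step1 (hs : IsSimpleGroup G) (i1 : Fin n) (P : Fin k → Fin n → G)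
    (hP : Function.Injective P) :
    ∃ Q : Fin k → Fin n → G, GReach (fun s => mkHom (P s)) (fun s => mkHom (Q s)) ∧
      Function.Injective (fun s => Q s i1) := by
  have hne : ∀ s : Fin k,
      (Finset.univ.filter (fun t => ∀ l, l ≠ i1 → P s l = P t l)).Nonempty :=
    fun s => ⟨s, Finset.mem_filter.mpr ⟨Finset.mem_univ s, fun l _ => rfl⟩⟩
  set rep : Fin k → Fin k := fun s =>
    (Finset.univ.filter (fun t => ∀ l, l ≠ i1 → P s l = P t l)).min' (hne s) with hrepd
  have hrep1 : ∀ s, ∀ l, l ≠ i1 → P s l = P (rep s) l := fun s =>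
    (Finset.mem_filter.mp (Finset.min'_mem _ (hne s))).2
  have hrep2 : ∀ s t, (∀ l, l ≠ i1 → P s l = P t l) → rep s = rep t := by
    intro s t hst
    have heq : (Finset.univ.filter (fun u => ∀ l, l ≠ i1 → P s l = P u l))
        = (Finset.univ.filter (fun u => ∀ l, l ≠ i1 → P t l = P u l)) := by
      apply Finset.filter_congr
      intro u _
      constructor
      · intro h l hl; rw [← hst l hl]; exact h l hl
      · intro h l hl; rw [hst l hl]; exact h l hl
    show (Finset.univ.filter _).min' (hne s) = (Finset.univ.filter _).min' (hne t)
    congr 1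
  obtain ⟨D, hD⟩ := greedy (fun s => P s i1) rep (by
    intro s t hr hst hbeq
    apply hst
    apply hP
    funext l
    by_cases hl : l = i1
    · subst hl; exact hbeq
    · rw [hrep1 s l hl, hrep1 t l hl, hr])
  refine ⟨fun s => Function.update (P s) i1 (P s i1 * D (rep s)), ?_, ?_⟩
  · apply movable hs i1 P
    intro s t hst
    rw [inv_mul_cancel_left, inv_mul_cancel_left, hrep2 s t hst]
  · have hQ : (fun s => Function.update (P s) i1 (P s i1 * D (rep s)) i1)
        = fun s => P s i1 * D (rep s) := by
      funext s
      rw [Function.update_self]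
    rw [hQ]
    exact hD

private lemma step3 (hs : IsSimpleGroup G) (i0 : Fin n) (cst : Fin k → G)
    (hcst : Function.Injective cst) (S : Finset (Fin n)) :
    ∀ P : Fin k → Fin n → G, i0 ∉ S → (∀ s, P s i0 = cst s) →
      GReach (fun s => mkHom (P s))
        (fun s => mkHom (fun l => if l ∈ S then 1 else P s l)) := by
  classical
  induction S using Finset.induction_on with
  | empty =>
    intro P _ _
    have heq : (fun s => mkHom (fun l => if l ∈ (∅ : Finset (Fin n)) then 1 else P s l))
        = fun s => mkHom (P s) := by
      funext s
      refine congrArg mkHom ?_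
      funext l
      rw [if_neg (Finset.notMem_empty l)]
    rw [heq]
    exact greach_refl _
  | @insert a S hnota ihS =>
    intro P hi0 hP
    have hai0 : i0 ≠ a := fun h => hi0 (h ▸ Finset.mem_insert_self a S)
    have hi0S : i0 ∉ S := fun h => hi0 (Finset.mem_insert_of_mem h)
    have reach1 : GReach (fun s => mkHom (P s))
        (fun s => mkHom (Function.update (P s) a 1)) := by
      apply movable hs a P (fun _ => 1)
      intro s t hst
      have hsteq : s = t := hcst (by rw [← hP s, ← hP t]; exact hst i0 hai0)
      subst hsteq; rfl
    have hP1 : ∀ s, Function.update (P s) a 1 i0 = cst s := by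
      intro s
      rw [Function.update_of_ne hai0]
      exact hP s
    have reach2 := ihS (fun s => Function.update (P s) a 1) hi0S hP1
    have heq : (fun s => mkHom (fun l => if l ∈ S then 1 else Function.update (P s) a 1 l))
        = fun s => mkHom (fun l => if l ∈ insert a S then 1 else P s l) := by
      funext s
      refine congrArg mkHom ?_
      funext l
      by_cases hlS : l ∈ S
      · rw [if_pos hlS, if_pos (Finset.mem_insert_of_mem hlS)]
      · rw [if_neg hlS]
        by_cases hla : l = a
        · subst hla
          rw [Function.update_self, if_pos (Finset.mem_insert_self l S)]
        · rw [Function.update_of_ne hla, if_neg (fun (h : l ∈ insert a S) => by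
            rcases Finset.mem_insert.mp h with h1 | h1
            · exact hla h1
            · exact hlS h1)]
    exact greach_trans reach1 (heq ▸ reach2)

private lemma canon (hs : IsSimpleGroup G) (hn : 2 ≤ n) (cst : Fin k → G)
    (hcst : Function.Injective cst) (P : Fin k → Fin n → G) (hP : Function.Injective P) :
    GReach (fun s => mkHom (P s))
      (fun s => mkHom (fun l => if l = (⟨0, by omega⟩ : Fin n) then cst s else 1)) := by
  classical
  set i0 : Fin n := ⟨0, by omega⟩ with hi0d
  set i1 : Fin n := ⟨1, by omega⟩ with hi1d
  have hi01 : i0 ≠ i1 := by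
    intro h
    have := congrArg Fin.val h
    simp [hi0d, hi1d] at this
  obtain ⟨Q, hQreach, hQinj⟩ := step1 hs i1 P hP
  have reach2 : GReach (fun s => mkHom (Q s))
      (fun s => mkHom (Function.update (Q s) i0 (cst s))) := by
    apply movable hs i0 Q cst
    intro s t hst
    have hsteq : s = t := hQinj (hst i1 (Ne.symm hi01))
    subst hsteq; rfl
  have hQ2i0 : ∀ s, Function.update (Q s) i0 (cst s) i0 = cst s := fun s =>
    Function.update_self i0 (cst s) (Q s)
  have reach3 := step3 hs i0 cst hcst (Finset.univ.erase i0)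
    (fun s => Function.update (Q s) i0 (cst s)) (Finset.notMem_erase i0 _) hQ2i0
  have hfinal : (fun s => mkHom (fun l =>
        if l ∈ Finset.univ.erase i0 then 1 else Function.update (Q s) i0 (cst s) l))
      = fun s => mkHom (fun l => if l = i0 then cst s else 1) := by
    funext s
    refine congrArg mkHom ?_
    funext l
    by_cases hl : l = i0
    · subst hl
      rw [if_neg (fun h => (Finset.mem_erase.mp h).1 rfl), if_pos rfl]
      exact hQ2i0 s
    · rw [if_pos (Finset.mem_erase.mpr ⟨hl, Finset.mem_univ l⟩), if_neg hl]
  exact greach_trans hQreach (greach_trans reach2 (hfinal ▸ reach3))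

end Endgame

/-- For `G` an infinite simple group and `n ≥ 2`, the action of `Aut_G(G ∗ F_n)` on
`Hom_G(G ∗ F_n, G)` by precomposition is highly transitive: for every `k ≥ 1` and
any two injective `k`-tuples `(φ_1, …, φ_k)` and `(ψ_1, …, ψ_k)` of
`G`-homomorphisms, there is a `G`-automorphism `α` with `φ_i ∘ α = ψ_i` for all
`i`. -/
theorem gAut_action_highly_transitive (G : Type*) [Group G] [Infinite G]
    (hsimple : IsSimpleGroup G) (n : ℕ) (hn : 2 ≤ n)
    (k : ℕ) (hk : 1 ≤ k) (φ ψ : Fin k → GHom G n)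
    (hφ : Function.Injective φ) (hψ : Function.Injective ψ) :
    ∃ α ∈ gAut G n, ∀ i : Fin k, (φ i).1.comp α.toMonoidHom = (ψ i).1 := by
  classical
  set P : Fin k → Fin n → G := fun s i => (φ s).1 (Monoid.Coprod.inr (FreeGroup.of i)) with hPd
  set R : Fin k → Fin n → G := fun s i => (ψ s).1 (Monoid.Coprod.inr (FreeGroup.of i)) with hRd
  have hmkP : (fun s => mkHom (P s)) = φ := funext fun s => mkHom_toT (φ s)
  have hmkR : (fun s => mkHom (R s)) = ψ := funext fun s => mkHom_toT (ψ s)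
  have hPinj : Function.Injective P := by
    intro s t h
    apply hφ
    rw [← mkHom_toT (φ s), ← mkHom_toT (φ t)]
    exact congrArg mkHom h
  have hRinj : Function.Injective R := by
    intro s t h
    apply hψ
    rw [← mkHom_toT (ψ s), ← mkHom_toT (ψ t)]
    exact congrArg mkHom h
  set cst : Fin k → G := fun s => (Fin.valEmbedding.trans (Infinite.natEmbedding G)) s
    with hcstd
  have hcst : Function.Injective cst := (Fin.valEmbedding.trans (Infinite.natEmbedding G)).injective
  have h1 := canon hsimple hn cst hcst P hPinj
  have h2 := canon hsimple hn cst hcst R hRinj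
  have h3 : GReach φ ψ := by
    rw [← hmkP, ← hmkR]
    exact greach_trans h1 (greach_symm h2)
  obtain ⟨α, hα, hcomp⟩ := h3
  exact ⟨α, hα, hcomp⟩
end

section
/- Let G be a nonabelian simple group, let T ⊆ G be a finite subset, and let g ∈ G with g ∉ T. Then there exists an element w of G ∗ F_1 such that ev_t(w) = 1 for every t ∈ T and ev_g(w) ≠ 1, where for h ∈ G, ev_h : G ∗ F_1 → G denotes the unique G-homomorphism sending the generator x of F_1 to h. (Such a w is said to separate T from g.) -/
open scoped commutatorElement

def evAt (G : Type*) [Group G] (h : G) :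
    Monoid.Coprod G (FreeGroup Unit) →* G :=
  Monoid.Coprod.lift (MonoidHom.id G) (FreeGroup.lift fun _ => h)

@[simp] lemma evAt_inl {G : Type*} [Group G] (h a : G) :
    evAt G h (Monoid.Coprod.inl a) = a := by
  simp [evAt]

@[simp] lemma evAt_x {G : Type*} [Group G] (h : G) :
    evAt G h (Monoid.Coprod.inr (FreeGroup.of ())) = h := by
  simp [evAt]

lemma exists_conj_noncomm {G : Type*} [Group G]
    (hsimple : IsSimpleGroup G) (hna : ∃ a b : G, a * b ≠ b * a)
    {a b : G} (ha : a ≠ 1) (hb : b ≠ 1) : ∃ c : G, ⁅c * a * c⁻¹, b⁆ ≠ 1 := by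
  by_contra h
  push_neg at h
  have hNC : Subgroup.normalClosure ({a} : Set G) = ⊤ := by
    rcases hsimple.eq_bot_or_eq_top_of_normal _ (Subgroup.normalClosure_normal) with h1 | h1
    · exfalso; apply ha
      have := Subgroup.subset_normalClosure (s := ({a} : Set G)) rfl
      rw [h1] at this
      simpa using this
    · exact h1
  have hle : Subgroup.normalClosure ({a} : Set G) ≤ Subgroup.centralizer {b} := by
    rw [Subgroup.normalClosure, Subgroup.closure_le]
    intro x hx
    rw [Group.mem_conjugatesOfSet_iff] at hx
    obtain ⟨y, hy, hconj⟩ := hx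
    rcases hy with rfl
    obtain ⟨c, rfl⟩ := isConj_iff.mp hconj
    intro z hz
    rcases hz with rfl
    have hcomm : Commute (c * y * c⁻¹) z := commutatorElement_eq_one_iff_commute.mp (h c)
    exact hcomm.symm.eq
  rw [hNC, top_le_iff] at hle
  have hbc : b ∈ Subgroup.center G := by
    rw [Subgroup.mem_center_iff]
    intro x
    have hx : x ∈ Subgroup.centralizer ({b} : Set G) := hle ▸ Subgroup.mem_top x
    exact (Subgroup.mem_centralizer_iff.mp hx b rfl).symm
  rcases hsimple.eq_bot_or_eq_top_of_normal (Subgroup.center G) inferInstance with h1 | h1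
  · rw [h1] at hbc; exact hb hbc
  · obtain ⟨u, v, huv⟩ := hna
    apply huv
    have hu : u ∈ Subgroup.center G := h1 ▸ Subgroup.mem_top u
    exact (Subgroup.mem_center_iff.mp hu v).symm

/-- For `G` a nonabelian simple group, any finite subset `T ⊆ G` can be separated
from any `g ∈ G \ T`: there is `w ∈ G ∗ F_1` with `ev_t(w) = 1` for all `t ∈ T`
and `ev_g(w) ≠ 1`. -/
theorem separating_word_exists (G : Type*) [Group G]
    (hsimple : IsSimpleGroup G) (hna : ∃ a b : G, a * b ≠ b * a)
    (T : Finset G) (g : G) (hg : g ∉ T) :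
    ∃ w : Monoid.Coprod G (FreeGroup Unit),
      (∀ t ∈ T, evAt G t w = 1) ∧ evAt G g w ≠ 1 := by
  classical
  induction T using Finset.induction_on with
  | empty =>
      obtain ⟨u, v, huv⟩ := hna
      refine ⟨Monoid.Coprod.inl ⁅u, v⁆, by simp, ?_⟩
      simp only [evAt_inl]
      intro h
      exact huv (commutatorElement_eq_one_iff_commute.mp h).eq
  | @insert t₀ S ht₀ ih =>
      have hg' : g ∉ S := fun h => hg (Finset.mem_insert_of_mem h)
      have hgt : g ≠ t₀ := fun h => hg (h ▸ Finset.mem_insert_self t₀ S)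
      obtain ⟨w₁, hw₁, hw₁g⟩ := ih hg'
      set w₂ : Monoid.Coprod G (FreeGroup Unit) :=
        Monoid.Coprod.inr (FreeGroup.of ()) * Monoid.Coprod.inl t₀⁻¹ with hw₂def
      have hb : evAt G g w₂ = g * t₀⁻¹ := by simp [hw₂def]
      have hbne : g * t₀⁻¹ ≠ 1 := fun h => hgt (mul_inv_eq_one.mp h)
      obtain ⟨c, hc⟩ := exists_conj_noncomm hsimple hna hw₁g hbne
      refine ⟨⁅Monoid.Coprod.inl c * w₁ * (Monoid.Coprod.inl c)⁻¹, w₂⁆, ?_, ?_⟩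
      · intro t ht
        rw [map_commutatorElement]
        rcases Finset.mem_insert.mp ht with rfl | htS
        · have h2 : evAt G t w₂ = 1 := by simp [hw₂def]
          rw [h2, commutatorElement_one_right]
        · have h1 : evAt G t (Monoid.Coprod.inl c * w₁ * (Monoid.Coprod.inl c)⁻¹) = 1 := by
            simp [map_mul, map_inv, hw₁ t htS]
          rw [h1, commutatorElement_one_left]
      · intro h
        apply hc
        rw [map_commutatorElement] at h
        simpa [map_mul, map_inv, hb] using h
end

section
/- Let n ≥ 2 and let G be a group that is not mixed identity-free (not MIF). Then the action of Aut_G(G ∗ F_n) on Hom_G(G ∗ F_n, G) by precomposition is not faithful: there exists a non-identity G-automorphism α of G ∗ F_n with φ ∘ α = φ for every G-homomorphism φ : G ∗ F_n → G. -/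
/-- `G` is mixed identity-free (MIF) if for every `m ≥ 1` and every `w ≠ 1` in
`G ∗ F_m` there is a `G`-homomorphism `φ : G ∗ F_m → G` with `φ w ≠ 1`. -/
def IsMIF (G : Type*) [Group G] : Prop :=
  ∀ m : ℕ, 1 ≤ m → ∀ w : Monoid.Coprod G (FreeGroup (Fin m)), w ≠ 1 →
    ∃ φ : Monoid.Coprod G (FreeGroup (Fin m)) →* G,
      (∀ g : G, φ (Monoid.Coprod.inl g) = g) ∧ φ w ≠ 1

open Monoid Multiplicative

namespace MIFAux

section WordLemmas

open Monoid.CoprodI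

variable {ι : Type*} [DecidableEq ι] {M : ι → Type*} [∀ i, Monoid (M i)] [∀ i, DecidableEq (M i)]

lemma toList_of_smul_prepend {i : ι} (m : M i) (v : Word M)
    (h1 : m ≠ 1) (h2 : v.fstIdx ≠ some i) :
    (CoprodI.of m • v).toList = ⟨i, m⟩ :: v.toList := by
  rw [← Word.cons_eq_smul (m := m) (ls := v) (h1 := h2) (h2 := h1)]
  rfl

lemma toList_of_smul_merge {i : ι} (m x : M i) (v : Word M) (rest : List (Σ i, M i))
    (hv : v.toList = ⟨i, x⟩ :: rest) (hmx : m * x ≠ 1) :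
    (CoprodI.of m • v).toList = ⟨i, m * x⟩ :: rest := by
  have hx : x ≠ 1 := v.ne_one _ (hv ▸ List.mem_cons_self (a := (⟨i, x⟩ : Σ i, M i)) (l := rest))
  have hch : List.Chain' (fun l l' : Σ i, M i => l.1 ≠ l'.1) (⟨i, x⟩ :: rest) := by
    rw [← hv]; exact v.chain_ne
  let tail : Word M :=
    ⟨rest, fun l hl => v.ne_one l (hv ▸ List.mem_cons_of_mem _ hl), hch.tail⟩
  have htail : tail.fstIdx ≠ some i := by
    intro hc
    have h' := (List.isChain_cons.mp hch).1
    rw [Word.fstIdx] at hc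
    rcases hr : rest.head? with _ | l
    · rw [hr] at hc; simp at hc
    · rw [hr] at hc
      simp only [Option.map_some] at hc
      exact h' l hr (by simpa using hc.symm)
  have hveq : v = Word.cons x tail htail hx := by
    apply Word.ext
    simp [hv, Word.cons, tail]
  rw [hveq, Word.cons_eq_smul, ← mul_smul, ← map_mul]
  rw [toList_of_smul_prepend (m * x) tail hmx htail]

lemma head?_of_smul_prepend {i j : ι} (hij : j ≠ i) (m : M i) (hm : m ≠ 1)
    (v : Word M) (x : M j) (hv : v.toList.head? = some ⟨j, x⟩) :
    (CoprodI.of m • v).toList.head? = some ⟨i, m⟩ := by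
  have hfst : v.fstIdx ≠ some i := by
    rw [Word.fstIdx, hv]
    simpa using hij
  rw [toList_of_smul_prepend m v hm hfst]
  rfl

lemma head?_of_smul_merge {i : ι} (m x : M i) (v : Word M)
    (hv : v.toList.head? = some ⟨i, x⟩) (hmx : m * x ≠ 1) :
    (CoprodI.of m • v).toList.head? = some ⟨i, m * x⟩ := by
  obtain ⟨rest, hrest⟩ : ∃ rest, v.toList = ⟨i, x⟩ :: rest := by
    rcases hl : v.toList with _ | ⟨b, t⟩
    · rw [hl] at hv; simp at hv
    · rw [hl] at hv; simp only [List.head?_cons, Option.some.injEq] at hv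
      exact ⟨t, by rw [hv]⟩
  rw [toList_of_smul_merge m x v rest hrest hmx]
  rfl

end WordLemmas

/-- universe-polymorphic copy of `Multiplicative ℤ`. -/
abbrev MZ : Type _ := ULift (Multiplicative ℤ)

/-- `x^k` as an element of `MZ`. -/
def mz (k : ℤ) : MZ.{u} := ⟨ofAdd k⟩

lemma mz_mul (a b : ℤ) : mz.{u} a * mz b = mz (a + b) := rfl

lemma mz_inv (a : ℤ) : (mz.{u} a)⁻¹ = mz (-a) := rfl

lemma mz_injective : Function.Injective mz.{u} := by
  intro a b h
  simpa [mz, ULift.ext_iff] using h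

lemma mz_eq_one {a : ℤ} : mz.{u} a = 1 ↔ a = 0 := by
  constructor
  · intro h; exact mz_injective (h.trans rfl)
  · rintro rfl; rfl

lemma mz_surjective : Function.Surjective mz.{u} := fun x => ⟨toAdd x.down, rfl⟩

/-- homomorphism `MZ →* C` sending the generator to `x`. -/
def zhom {C : Type*} [Group C] (x : C) : MZ →* C :=
  (zpowersHom C x).comp (MulEquiv.ulift.toMonoidHom)

lemma zhom_mz {C : Type*} [Group C] (x : C) (k : ℤ) : zhom x (mz k) = x ^ k := rfl

/-- The two-element family `(G, ℤ)` : target of the embedding. -/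
def BF (G : Type u) : Bool → Type u := fun b => match b with
  | false => G
  | true => MZ.{u}

instance BF.instGroup {G : Type u} [Group G] : ∀ b, Group (BF G b)
  | false => inferInstanceAs (Group G)
  | true => inferInstanceAs (Group MZ)

/-- The `m+1`-element family `(G, ℤ, …, ℤ)` : source of the embedding. -/
def OF (G : Type u) (m : ℕ) : Option (Fin m) → Type u := fun o => match o with
  | none => G
  | some _ => MZ.{u}

instance OF.instGroup {G : Type u} [Group G] {m : ℕ} : ∀ o, Group (OF G m o)
  | none => inferInstanceAs (Group G)
  | some _ => inferInstanceAs (Group MZ)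

variable (G : Type u) [Group G]

/-- letter `x^k` in `CoprodI (BF G)`. -/
def xl (k : ℤ) : CoprodI (BF G) := CoprodI.of (i := true) (M := BF G) (mz k)

/-- letter `g` in `CoprodI (BF G)`. -/
def gl (g : G) : CoprodI (BF G) := CoprodI.of (i := false) (M := BF G) g

lemma xl_inv (k : ℤ) : (xl G k)⁻¹ = xl G (-k) := by
  exact (map_inv (CoprodI.of (i := true) (M := BF G)) (mz k)).symm

lemma gl_inv (g : G) : (gl G g)⁻¹ = gl G g⁻¹ := by
  exact (map_inv (CoprodI.of (i := false) (M := BF G)) g).symm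

/-- the ping-pong elements. -/
def tp (g₀ : G) (a : ℤ) : CoprodI (BF G) :=
  xl G a * gl G g₀ * xl G 1 * gl G g₀ * xl G (-a - 1)

lemma tp_inv (g₀ : G) (a : ℤ) :
    (tp G g₀ a)⁻¹ = xl G (a + 1) * gl G g₀⁻¹ * xl G (-1) * gl G g₀⁻¹ * xl G (-a) := by
  rw [tp]
  simp only [mul_inv_rev, xl_inv, gl_inv]
  have : -(-a - 1) = a + 1 := by ring
  rw [this]
  group



namespace Step

open Monoid.CoprodI

instance instDecEqBF {G : Type u} [DecidableEq G] : ∀ b, DecidableEq (BF G b)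
  | false => inferInstanceAs (DecidableEq G)
  | true => inferInstanceAs (DecidableEq MZ)

instance instDecEqOF {G : Type u} [DecidableEq G] {m : ℕ} : ∀ o, DecidableEq (OF G m o)
  | none => inferInstanceAs (DecidableEq G)
  | some _ => inferInstanceAs (DecidableEq MZ)

variable {G : Type u} [Group G] [DecidableEq G]

/-- Words whose head is a `G`-letter or an `x^z`-letter with `z ≠ c`. -/
def Dset (G : Type u) [Group G] (c : ℤ) : Set (Word (BF G)) :=
  {v | (∃ g : G, g ≠ 1 ∧ v.toList.head? = some ⟨false, g⟩) ∨
    ∃ z : ℤ, z ≠ c ∧ v.toList.head? = some ⟨true, mz z⟩}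

lemma step_tp {g₀ : G} (hg₀ : g₀ ≠ 1) {a : ℤ} (ha : 1 ≤ a) {v : Word (BF G)}
    (hv : v ∈ Dset G (a + 1)) :
    ((tp G g₀ a) • v).toList.head? = some ⟨true, mz a⟩ := by
  have h1 : ∃ q : MZ, (xl G (-a - 1) • v).toList.head? = some ⟨true, q⟩ := by
    rcases hv with ⟨g, hg, hgv⟩ | ⟨z, hza, hz⟩
    · exact ⟨mz (-a - 1), head?_of_smul_prepend (M := BF G) (i := true) (j := false)
        (by simp) (mz (-a - 1)) (mz_eq_one.not.mpr (by omega)) v g hgv⟩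
    · exact ⟨mz (-a - 1) * mz z, head?_of_smul_merge (M := BF G) (i := true)
        (mz (-a - 1)) (mz z) v hz (mz_eq_one.not.mpr (by omega) : mz (-a - 1 + z) ≠ 1)⟩
  obtain ⟨q, h1⟩ := h1
  have h2 : (gl G g₀ • (xl G (-a - 1) • v)).toList.head? = some ⟨false, g₀⟩ :=
    head?_of_smul_prepend (M := BF G) (i := false) (j := true) (by simp) g₀ hg₀ _ q h1
  have h3 : (xl G 1 • (gl G g₀ • (xl G (-a - 1) • v))).toList.head? =
      some ⟨true, mz 1⟩ :=
    head?_of_smul_prepend (M := BF G) (i := true) (j := false) (by simp) (mz 1)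
      (mz_eq_one.not.mpr (by omega)) _ g₀ h2
  have h4 : (gl G g₀ • (xl G 1 • (gl G g₀ • (xl G (-a - 1) • v)))).toList.head? =
      some ⟨false, g₀⟩ :=
    head?_of_smul_prepend (M := BF G) (i := false) (j := true) (by simp) g₀ hg₀ _
      (mz 1) h3
  have h5 : (xl G a • (gl G g₀ • (xl G 1 • (gl G g₀ •
      (xl G (-a - 1) • v))))).toList.head? = some ⟨true, mz a⟩ :=
    head?_of_smul_prepend (M := BF G) (i := true) (j := false) (by simp) (mz a)
      (mz_eq_one.not.mpr (by omega)) _ g₀ h4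
  rw [tp, mul_smul, mul_smul, mul_smul, mul_smul]
  exact h5

lemma step_tp_inv {g₀ : G} (hg₀ : g₀ ≠ 1) {a : ℤ} (ha : 1 ≤ a) {v : Word (BF G)}
    (hv : v ∈ Dset G a) :
    ((tp G g₀ a)⁻¹ • v).toList.head? = some ⟨true, mz (a + 1)⟩ := by
  have hg₀' : g₀⁻¹ ≠ 1 := inv_ne_one.mpr hg₀
  have h1 : ∃ q : MZ, (xl G (-a) • v).toList.head? = some ⟨true, q⟩ := by
    rcases hv with ⟨g, hg, hgv⟩ | ⟨z, hza, hz⟩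
    · exact ⟨mz (-a), head?_of_smul_prepend (M := BF G) (i := true) (j := false)
        (by simp) (mz (-a)) (mz_eq_one.not.mpr (by omega)) v g hgv⟩
    · exact ⟨mz (-a) * mz z, head?_of_smul_merge (M := BF G) (i := true)
        (mz (-a)) (mz z) v hz (mz_eq_one.not.mpr (by omega) : mz (-a + z) ≠ 1)⟩
  obtain ⟨q, h1⟩ := h1
  have h2 : (gl G g₀⁻¹ • (xl G (-a) • v)).toList.head? = some ⟨false, g₀⁻¹⟩ :=
    head?_of_smul_prepend (M := BF G) (i := false) (j := true) (by simp) g₀⁻¹ hg₀' _ q h1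
  have h3 : (xl G (-1) • (gl G g₀⁻¹ • (xl G (-a) • v))).toList.head? =
      some ⟨true, mz (-1)⟩ :=
    head?_of_smul_prepend (M := BF G) (i := true) (j := false) (by simp) (mz (-1))
      (mz_eq_one.not.mpr (by omega)) _ g₀⁻¹ h2
  have h4 : (gl G g₀⁻¹ • (xl G (-1) • (gl G g₀⁻¹ • (xl G (-a) • v)))).toList.head? =
      some ⟨false, g₀⁻¹⟩ :=
    head?_of_smul_prepend (M := BF G) (i := false) (j := true) (by simp) g₀⁻¹ hg₀' _
      (mz (-1)) h3
  have h5 : (xl G (a + 1) • (gl G g₀⁻¹ • (xl G (-1) • (gl G g₀⁻¹ •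
      (xl G (-a) • v))))).toList.head? = some ⟨true, mz (a + 1)⟩ :=
    head?_of_smul_prepend (M := BF G) (i := true) (j := false) (by simp) (mz (a + 1))
      (mz_eq_one.not.mpr (by omega)) _ g₀⁻¹ h4
  rw [tp_inv, mul_smul, mul_smul, mul_smul, mul_smul]
  exact h5

lemma tp_zpow {g₀ : G} (hg₀ : g₀ ≠ 1) {a : ℤ} (ha : 1 ≤ a) {k : ℤ} (hk : k ≠ 0)
    {v : Word (BF G)} (hv : v ∈ Dset G (a + 1) ∩ Dset G a) :
    ((tp G g₀ a ^ k) • v).toList.head? = some ⟨true, mz a⟩ ∨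
      ((tp G g₀ a ^ k) • v).toList.head? = some ⟨true, mz (a + 1)⟩ := by
  rcases hk.lt_or_gt with hneg | hpos
  · right
    have key : ∀ l : ℕ, (((tp G g₀ a)⁻¹ ^ (l + 1)) • v).toList.head? =
        some ⟨true, mz (a + 1)⟩ := by
      intro l
      induction l with
      | zero => rw [pow_one]; exact step_tp_inv hg₀ ha hv.2
      | succ l ih =>
        rw [pow_succ', mul_smul]
        exact step_tp_inv hg₀ ha (Or.inr ⟨a + 1, by omega, ih⟩)
    obtain ⟨l, hl⟩ : ∃ l : ℕ, k = -(l + 1 : ℕ) := by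
      refine ⟨(-k - 1).toNat, by omega⟩
    rw [hl, zpow_neg, zpow_natCast, ← inv_pow]
    exact key l
  · left
    have key : ∀ l : ℕ, (((tp G g₀ a) ^ (l + 1)) • v).toList.head? =
        some ⟨true, mz a⟩ := by
      intro l
      induction l with
      | zero => rw [pow_one]; exact step_tp hg₀ ha hv.1
      | succ l ih =>
        rw [pow_succ', mul_smul]
        exact step_tp hg₀ ha (Or.inr ⟨a, by omega, ih⟩)
    obtain ⟨l, hl⟩ : ∃ l : ℕ, k = (l + 1 : ℕ) := ⟨(k - 1).toNat, by omega⟩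
    rw [hl, zpow_natCast]
    exact key l

end Step

section Injective

open Monoid.CoprodI Step

variable (G : Type u) [Group G]

/-- The homomorphisms from the factors of `G ∗ F_m` into `CoprodI (BF G)`. -/
def pf (g₀ : G) (m : ℕ) : ∀ o : Option (Fin m), OF G m o →* CoprodI (BF G) :=
  fun o => match o with
  | none => CoprodI.of (i := (false : Bool)) (M := BF G)
  | some j => zhom (tp G g₀ (2 * (j : ℤ) + 1))

/-- The ping-pong sets. -/
def Xs (m : ℕ) : Option (Fin m) → Set (Word (BF G)) := fun o => match o with
  | none => {v | ∃ g : G, g ≠ 1 ∧ v.toList.head? = some ⟨false, g⟩}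
  | some j => {v | v.toList.head? = some ⟨true, mz (2 * (j : ℤ) + 1)⟩ ∨
      v.toList.head? = some ⟨true, mz (2 * (j : ℤ) + 2)⟩}

/-- A singleton word. -/
def singleW {ι : Type*} {M : ι → Type*} [∀ i, Monoid (M i)] {i : ι} (x : M i)
    (hx : x ≠ 1) : Word M :=
  ⟨[⟨i, x⟩], by simpa using hx, List.isChain_singleton _⟩

theorem lift_pf_injective {g₀ : G} (hg₀ : g₀ ≠ 1) (m : ℕ) (hm : 1 ≤ m) :
    Function.Injective (CoprodI.lift (pf G g₀ m)) := by
  classical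
  haveI : Nontrivial (Option (Fin m)) := ⟨⟨none, some ⟨0, hm⟩, by simp⟩⟩
  haveI : Infinite MZ.{u} := Infinite.of_injective mz mz_injective
  apply CoprodI.lift_injective_of_ping_pong (pf G g₀ m) ?hcard (Xs G m) ?hne ?hdisj ?hpp
  case hcard =>
    right
    refine ⟨some ⟨0, hm⟩, ?_⟩
    show (3 : Cardinal) ≤ Cardinal.mk MZ.{u}
    exact le_trans (by simpa using (Cardinal.nat_lt_aleph0 3).le) (Cardinal.aleph0_le_mk _)
  case hne =>
    rintro (_ | j)
    · exact ⟨singleW (M := BF G) (i := false) g₀ hg₀, g₀, hg₀, rfl⟩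
    · refine ⟨singleW (M := BF G) (i := true) (mz (2 * (j : ℤ) + 1))
        (mz_eq_one.not.mpr (by omega)), Or.inl rfl⟩
  case hdisj =>
    rintro (_ | j₁) (_ | j₂) hne
    · exact absurd rfl hne
    all_goals
      simp only [Function.onFun]
      rw [Set.disjoint_left]
      rintro v hv₁ hv₂
    · obtain ⟨g, hg, hv₁⟩ := hv₁
      rcases hv₂ with hv₂ | hv₂ <;> rw [hv₁] at hv₂ <;>
        exact absurd (congrArg Sigma.fst (Option.some.inj hv₂)) (by simp)
    · obtain ⟨g, hg, hv₂⟩ := hv₂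
      rcases hv₁ with hv₁ | hv₁ <;> rw [hv₁] at hv₂ <;>
        exact absurd (congrArg Sigma.fst (Option.some.inj hv₂)) (by simp)
    · have hj : (j₁ : ℤ) ≠ (j₂ : ℤ) := by
        simpa [Fin.val_inj] using fun h => hne (by rw [h])
      rcases hv₁ with hv₁ | hv₁ <;> rcases hv₂ with hv₂ | hv₂ <;> rw [hv₁] at hv₂ <;>
        · have := mz_injective (eq_of_heq (Sigma.mk.inj_iff.mp (Option.some.inj hv₂)).2)
          omega
  case hpp =>
    rintro (_ | j₁) (_ | j₂) hne
    · exact absurd rfl hne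
    · -- i = none, j = some j₂ : multiplication by a `G`-letter
      rintro h hh _ ⟨v, hv, rfl⟩
      rcases hv with hv | hv <;>
        exact ⟨h, hh, head?_of_smul_prepend (M := BF G) (i := false) (j := true)
          (by simp) h hh v _ hv⟩
    · -- i = some j₁, j = none
      rintro h hh _ ⟨v, hv, rfl⟩
      obtain ⟨g, hg, hv⟩ := hv
      obtain ⟨k, rfl⟩ := mz_surjective h
      replace hh : k ≠ 0 := fun h0 => hh (by subst h0; rfl)
      have hpf : (pf G g₀ m (some j₁)) (mz k) = tp G g₀ (2 * (j₁ : ℤ) + 1) ^ k := rfl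
      have hD : v ∈ Dset G (2 * (j₁ : ℤ) + 1 + 1) ∩ Dset G (2 * (j₁ : ℤ) + 1) :=
        ⟨Or.inl ⟨g, hg, hv⟩, Or.inl ⟨g, hg, hv⟩⟩
      have h' := tp_zpow (G := G) hg₀ (by omega : 1 ≤ 2 * (j₁ : ℤ) + 1) hh hD
      show _ ∈ Xs G m (some j₁)
      rw [hpf]
      rcases h' with h' | h'
      · exact Or.inl h'
      · exact Or.inr (by rw [show (2 * (j₁ : ℤ) + 2) = 2 * (j₁ : ℤ) + 1 + 1 by ring]; exact h')
    · -- i = some j₁, j = some j₂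
      rintro h hh _ ⟨v, hv, rfl⟩
      have hj : (j₁ : ℤ) ≠ (j₂ : ℤ) := by
        simpa [Fin.val_inj] using fun h => hne (by rw [h])
      obtain ⟨k, rfl⟩ := mz_surjective h
      replace hh : k ≠ 0 := fun h0 => hh (by subst h0; rfl)
      have hpf : (pf G g₀ m (some j₁)) (mz k) = tp G g₀ (2 * (j₁ : ℤ) + 1) ^ k := rfl
      have hD : v ∈ Dset G (2 * (j₁ : ℤ) + 1 + 1) ∩ Dset G (2 * (j₁ : ℤ) + 1) := by
        rcases hv with hv | hv
        · exact ⟨Or.inr ⟨_, by omega, hv⟩, Or.inr ⟨_, by omega, hv⟩⟩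
        · exact ⟨Or.inr ⟨_, by omega, hv⟩, Or.inr ⟨_, by omega, hv⟩⟩
      have h' := tp_zpow (G := G) hg₀ (by omega : 1 ≤ 2 * (j₁ : ℤ) + 1) hh hD
      show _ ∈ Xs G m (some j₁)
      rw [hpf]
      rcases h' with h' | h'
      · exact Or.inl h'
      · exact Or.inr (by rw [show (2 * (j₁ : ℤ) + 2) = 2 * (j₁ : ℤ) + 1 + 1 by ring]; exact h')

end Injective

lemma mz_zpow (a k : ℤ) : mz.{u} a ^ k = mz (a * k) := by
  have h : mz.{u} a = MulEquiv.ulift.symm (ofAdd a) := rfl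
  rw [h, ← map_zpow, ← Int.ofAdd_mul]
  rfl

lemma xl_zpow (G : Type u) [Group G] (k : ℤ) : (xl G 1) ^ k = xl G k := by
  have h : (mz.{u} 1) ^ k = mz k := by rw [mz_zpow, one_mul]
  exact (map_zpow (CoprodI.of (i := true) (M := BF G)) (mz 1) k).symm.trans
    (congrArg (CoprodI.of (i := true) (M := BF G)) h)

section Assemble

open Monoid.CoprodI Monoid.Coprod

theorem exists_killed (G : Type u) [Group G] [Nontrivial G] {n m : ℕ} (hm : 1 ≤ m)
    (i₁ : Fin n) (w : Monoid.Coprod G (FreeGroup (Fin m))) (hw : w ≠ 1)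
    (hker : ∀ φ : Monoid.Coprod G (FreeGroup (Fin m)) →* G,
      (∀ g, φ (Monoid.Coprod.inl g) = g) → φ w = 1) :
    ∃ u : Monoid.Coprod G (FreeGroup (Fin n)), u ≠ 1 ∧
      (∀ φ : Monoid.Coprod G (FreeGroup (Fin n)) →* G,
        (∀ g, φ (Monoid.Coprod.inl g) = g) → φ u = 1) ∧
      (∀ s : Monoid.Coprod G (FreeGroup (Fin n)) →* Monoid.Coprod G (FreeGroup (Fin n)),
        (∀ g, s (Monoid.Coprod.inl g) = Monoid.Coprod.inl g) →
        s (Monoid.Coprod.inr (FreeGroup.of i₁)) = Monoid.Coprod.inr (FreeGroup.of i₁) →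
        s u = u) := by
  classical
  obtain ⟨g₀, hg₀⟩ := exists_ne (1 : G)
  set y : Monoid.Coprod G (FreeGroup (Fin n)) := Monoid.Coprod.inr (FreeGroup.of i₁) with hy
  set τ : Fin m → Monoid.Coprod G (FreeGroup (Fin n)) := fun j =>
    y ^ (2 * (j : ℤ) + 1) * Monoid.Coprod.inl g₀ * y * Monoid.Coprod.inl g₀ *
      y ^ (-(2 * (j : ℤ) + 1) - 1) with hτ
  set ψ : Monoid.Coprod G (FreeGroup (Fin m)) →* Monoid.Coprod G (FreeGroup (Fin n)) :=
    Monoid.Coprod.lift Monoid.Coprod.inl (FreeGroup.lift τ) with hψ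
  have hψinl : ∀ g : G, ψ (Monoid.Coprod.inl g) = Monoid.Coprod.inl g := fun g =>
    Monoid.Coprod.lift_apply_inl _ _ _
  have hψof : ∀ j : Fin m, ψ (Monoid.Coprod.inr (FreeGroup.of j)) = τ j := fun j => by
    rw [hψ, Monoid.Coprod.lift_apply_inr, FreeGroup.lift_apply_of]
  -- the comparison homomorphisms
  set β : Monoid.Coprod G (FreeGroup (Fin n)) →* CoprodI (BF G) :=
    Monoid.Coprod.lift (CoprodI.of (i := (false : Bool)) (M := BF G))
      (FreeGroup.lift fun _ => xl G 1) with hβ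
  set e : Monoid.Coprod G (FreeGroup (Fin m)) →* CoprodI (OF G m) :=
    Monoid.Coprod.lift (CoprodI.of (i := (none : Option (Fin m))) (M := OF G m))
      (FreeGroup.lift fun j => CoprodI.of (i := some j) (M := OF G m) (mz 1)) with he
  set e' : CoprodI (OF G m) →* Monoid.Coprod G (FreeGroup (Fin m)) :=
    CoprodI.lift (fun o => match o with
      | none => Monoid.Coprod.inl
      | some j => zhom (Monoid.Coprod.inr (FreeGroup.of j))) with he'
  have hee : e'.comp e = MonoidHom.id _ := by
    apply Monoid.Coprod.hom_ext
    · apply MonoidHom.ext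
      intro g
      show e' (e (Monoid.Coprod.inl g)) = Monoid.Coprod.inl g
      show e' (CoprodI.of (i := none) (M := OF G m) g) = _; rw [he']
      exact CoprodI.lift_of _ _
    · apply FreeGroup.ext_hom
      intro a
      show e' (e (Monoid.Coprod.inr (FreeGroup.of a))) = Monoid.Coprod.inr (FreeGroup.of a)
      show e' (CoprodI.of (i := some a) (M := OF G m) (mz 1)) = _; rw [he']; refine (CoprodI.lift_of _ _).trans ?_
      show zhom (Monoid.Coprod.inr (FreeGroup.of a)) (mz 1) = _
      rw [zhom_mz, zpow_one]
  have hβψ : β.comp ψ = (CoprodI.lift (pf G g₀ m)).comp e := by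
    apply Monoid.Coprod.hom_ext
    · apply MonoidHom.ext
      intro g
      show β (ψ (Monoid.Coprod.inl g)) = CoprodI.lift (pf G g₀ m) (e (Monoid.Coprod.inl g))
      rw [hψinl]; show CoprodI.of (i := false) (M := BF G) g =
        CoprodI.lift (pf G g₀ m) (CoprodI.of (i := none) (M := OF G m) g)
      exact (CoprodI.lift_of _ _).symm
    · apply FreeGroup.ext_hom
      intro a
      show β (ψ (Monoid.Coprod.inr (FreeGroup.of a))) =
        CoprodI.lift (pf G g₀ m) (e (Monoid.Coprod.inr (FreeGroup.of a)))
      rw [hψof]; show β (τ a) = CoprodI.lift (pf G g₀ m) (CoprodI.of (i := some a) (M := OF G m) (mz 1))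
      refine Eq.trans ?_ (CoprodI.lift_of _ _).symm
      have hβy : β y = xl G 1 := by
        show (FreeGroup.lift fun _ : Fin n => xl G 1) (FreeGroup.of i₁) = _
        exact FreeGroup.lift_apply_of
      have hβg : β (Monoid.Coprod.inl g₀) = gl G g₀ := by
        rfl
      have hpf : pf G g₀ m (some a) (mz 1) = tp G g₀ (2 * (a : ℤ) + 1) := by
        show zhom (tp G g₀ (2 * (a : ℤ) + 1)) (mz 1) = _
        rw [zhom_mz, zpow_one]
      rw [hpf, hτ]
      simp only [map_mul, map_zpow, hβy, hβg, xl_zpow]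
      rw [tp]
  have hinj := lift_pf_injective G hg₀ m hm
  refine ⟨ψ w, ?_, ?_, ?_⟩
  · intro hcontra
    have h1 : β (ψ w) = CoprodI.lift (pf G g₀ m) (e w) := DFunLike.congr_fun hβψ w
    rw [hcontra, map_one] at h1
    have h2 : e w = 1 := hinj (by rw [← h1, map_one])
    have h3 : w = 1 := by
      have := DFunLike.congr_fun hee w
      rw [MonoidHom.comp_apply, h2, map_one] at this
      exact this.symm.trans rfl
    exact hw h3
  · intro φ hφ
    have : (φ.comp ψ) w = 1 := hker (φ.comp ψ) (fun g => by
      rw [MonoidHom.comp_apply, hψinl]; exact hφ g)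
    simpa using this
  · intro s hsl hsy
    have hsψ : s.comp ψ = ψ := by
      apply Monoid.Coprod.hom_ext
      · apply MonoidHom.ext
        intro g
        show s (ψ (Monoid.Coprod.inl g)) = ψ (Monoid.Coprod.inl g)
        rw [hψinl, hsl, ← hψinl]
      · apply FreeGroup.ext_hom
        intro a
        show s (ψ (Monoid.Coprod.inr (FreeGroup.of a))) = ψ (Monoid.Coprod.inr (FreeGroup.of a))
        rw [hψof, hτ]
        simp only [map_mul, map_zpow, hsl, hsy]
    have := DFunLike.congr_fun hsψ w
    simpa using this

end Assemble

end MIFAux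

/-- If `n ≥ 2` and `G` is not MIF, then the action of `Aut_G(G ∗ F_n)` on
`Hom_G(G ∗ F_n, G)` by precomposition is not faithful: there is a non-identity
`G`-automorphism `α` with `φ ∘ α = φ` for every `G`-homomorphism `φ`. -/
theorem gAut_action_not_faithful_of_not_MIF (G : Type*) [Group G]
    (hmif : ¬ IsMIF G) (n : ℕ) (hn : 2 ≤ n) :
    ∃ α ∈ gAut G n, α ≠ 1 ∧
      ∀ φ : GHom G n, φ.1.comp α.toMonoidHom = φ.1 := by
  classical
  rw [IsMIF] at hmif
  push_neg at hmif
  obtain ⟨m, hm, w, hw, hker⟩ := hmif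
  have h0 : (0 : ℕ) < n := by omega
  have h1 : (1 : ℕ) < n := by omega
  set i0 : Fin n := ⟨0, h0⟩ with hi0
  set i1 : Fin n := ⟨1, h1⟩ with hi1
  have hi10 : i1 ≠ i0 := by
    simp [hi0, hi1, Fin.ext_iff]
  rcases subsingleton_or_nontrivial G with hG | hG
  · -- `G` trivial : use the automorphism swapping two generators
    refine ⟨MulEquiv.coprodCongr (MulEquiv.refl G)
      (FreeGroup.freeGroupCongr (Equiv.swap i0 i1)), ?_, ?_, ?_⟩
    · show ∀ g : G, _
      intro g
      show Monoid.Coprod.map _ _ (Monoid.Coprod.inl g) = Monoid.Coprod.inl g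
      rw [Monoid.Coprod.map_apply_inl]
      rfl
    · intro hcontra
      have h := congrArg (fun a : MulAut (Monoid.Coprod G (FreeGroup (Fin n))) =>
        a (Monoid.Coprod.inr (FreeGroup.of i0))) hcontra
      simp only [MulAut.one_apply] at h
      have hα : (MulEquiv.coprodCongr (MulEquiv.refl G)
          (FreeGroup.freeGroupCongr (Equiv.swap i0 i1)))
          (Monoid.Coprod.inr (FreeGroup.of i0)) =
          Monoid.Coprod.inr (FreeGroup.of i1) := by
        show Monoid.Coprod.map _ _ (Monoid.Coprod.inr (FreeGroup.of i0)) = _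
        simp [Monoid.Coprod.map_apply_inr, Equiv.swap_apply_left]
      exact hi10 (FreeGroup.of_injective (Monoid.Coprod.inr_injective (hα.symm.trans h)))
    · intro φ
      apply MonoidHom.ext
      intro z
      exact Subsingleton.elim _ _
  · -- `G` nontrivial : use the mixed identity
    obtain ⟨u, hu1, huker, hufix⟩ := MIFAux.exists_killed G hm i1 w hw hker
    set sgen : Fin n → Monoid.Coprod G (FreeGroup (Fin n)) := fun i =>
      Monoid.Coprod.inr (FreeGroup.of i) * (if i = i0 then u else 1) with hsgen
    set sgen' : Fin n → Monoid.Coprod G (FreeGroup (Fin n)) := fun i =>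
      Monoid.Coprod.inr (FreeGroup.of i) * (if i = i0 then u⁻¹ else 1) with hsgen'
    set s : Monoid.Coprod G (FreeGroup (Fin n)) →* Monoid.Coprod G (FreeGroup (Fin n)) :=
      Monoid.Coprod.lift Monoid.Coprod.inl (FreeGroup.lift sgen) with hs
    set s' : Monoid.Coprod G (FreeGroup (Fin n)) →* Monoid.Coprod G (FreeGroup (Fin n)) :=
      Monoid.Coprod.lift Monoid.Coprod.inl (FreeGroup.lift sgen') with hs'
    have hs_inl : ∀ g : G, s (Monoid.Coprod.inl g) = Monoid.Coprod.inl g := fun g =>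
      Monoid.Coprod.lift_apply_inl _ _ _
    have hs'_inl : ∀ g : G, s' (Monoid.Coprod.inl g) = Monoid.Coprod.inl g := fun g =>
      Monoid.Coprod.lift_apply_inl _ _ _
    have hs_of : ∀ i : Fin n, s (Monoid.Coprod.inr (FreeGroup.of i)) = sgen i := fun i => by
      rw [hs, Monoid.Coprod.lift_apply_inr, FreeGroup.lift_apply_of]
    have hs'_of : ∀ i : Fin n, s' (Monoid.Coprod.inr (FreeGroup.of i)) = sgen' i := fun i => by
      rw [hs', Monoid.Coprod.lift_apply_inr, FreeGroup.lift_apply_of]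
    have hs_y : s (Monoid.Coprod.inr (FreeGroup.of i1)) =
        Monoid.Coprod.inr (FreeGroup.of i1) := by
      rw [hs_of]
      simp only [hsgen]
      rw [if_neg hi10, mul_one]
    have hs'_y : s' (Monoid.Coprod.inr (FreeGroup.of i1)) =
        Monoid.Coprod.inr (FreeGroup.of i1) := by
      rw [hs'_of]
      simp only [hsgen']
      rw [if_neg hi10, mul_one]
    have hsu : s u = u := hufix s hs_inl hs_y
    have hs'u : s' u = u := hufix s' hs'_inl hs'_y
    have hss' : s.comp s' = MonoidHom.id _ := by
      apply Monoid.Coprod.hom_ext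
      · apply MonoidHom.ext
        intro g
        show s (s' (Monoid.Coprod.inl g)) = Monoid.Coprod.inl g
        rw [hs'_inl, hs_inl]
      · apply FreeGroup.ext_hom
        intro a
        show s (s' (Monoid.Coprod.inr (FreeGroup.of a))) = Monoid.Coprod.inr (FreeGroup.of a)
        rw [hs'_of]
        simp only [hsgen']
        by_cases ha : a = i0
        · rw [if_pos ha, map_mul, hs_of, map_inv, hsu]
          simp only [hsgen]
          rw [if_pos ha]
          group
        · rw [if_neg ha, mul_one, hs_of]
          simp only [hsgen]
          rw [if_neg ha, mul_one]
    have hs's : s'.comp s = MonoidHom.id _ := by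
      apply Monoid.Coprod.hom_ext
      · apply MonoidHom.ext
        intro g
        show s' (s (Monoid.Coprod.inl g)) = Monoid.Coprod.inl g
        rw [hs_inl, hs'_inl]
      · apply FreeGroup.ext_hom
        intro a
        show s' (s (Monoid.Coprod.inr (FreeGroup.of a))) = Monoid.Coprod.inr (FreeGroup.of a)
        rw [hs_of]
        simp only [hsgen]
        by_cases ha : a = i0
        · rw [if_pos ha, map_mul, hs'_of, hs'u]
          simp only [hsgen']
          rw [if_pos ha]
          group
        · rw [if_neg ha, mul_one, hs'_of]
          simp only [hsgen']
          rw [if_neg ha, mul_one]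
    refine ⟨MonoidHom.toMulEquiv s s' hs's hss', ?_, ?_, ?_⟩
    · show ∀ g : G, _
      intro g
      exact hs_inl g
    · intro hcontra
      have h := congrArg (fun a : MulAut (Monoid.Coprod G (FreeGroup (Fin n))) =>
        a (Monoid.Coprod.inr (FreeGroup.of i0))) hcontra
      simp only [MulAut.one_apply] at h
      have h' : Monoid.Coprod.inr (M := G) (FreeGroup.of i0) * u =
          Monoid.Coprod.inr (FreeGroup.of i0) := by
        conv_rhs => rw [← h]
        show _ = s (Monoid.Coprod.inr (FreeGroup.of i0))
        rw [hs_of]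
        simp [hsgen]
      exact hu1 (mul_eq_left.mp h')
    · intro φ
      apply Monoid.Coprod.hom_ext
      · apply MonoidHom.ext
        intro g
        show φ.1 (s (Monoid.Coprod.inl g)) = φ.1 (Monoid.Coprod.inl g)
        rw [hs_inl]
      · apply FreeGroup.ext_hom
        intro a
        show φ.1 (s (Monoid.Coprod.inr (FreeGroup.of a))) =
          φ.1 (Monoid.Coprod.inr (FreeGroup.of a))
        rw [hs_of]
        simp only [hsgen]
        by_cases ha : a = i0
        · rw [if_pos ha, map_mul, huker φ.1 φ.2, mul_one]
        · rw [if_neg ha, mul_one]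
end

section
/- Let G be a nontrivial group with trivial center and let n ≥ 1. If w ∈ G ∗ F_n is such that the inner automorphism of G ∗ F_n given by conjugation by w fixes inl(G) pointwise (i.e., conjugation by w is a G-automorphism), then w = 1; equivalently, the centralizer of inl(G) in G ∗ F_n is trivial, so the subgroup of Aut(G ∗ F_n) generated by the inner automorphisms and Aut_G(G ∗ F_n) is the (internal) semidirect product Inn(G ∗ F_n) ⋊ Aut_G(G ∗ F_n). -/
section Aux

lemma exists_ne_ne_ne {G : Type*} [Group G] [Nontrivial G]
    (hz : Subgroup.center G = ⊥) (u v : G) :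
    ∃ g : G, g ≠ 1 ∧ g ≠ u ∧ g ≠ v := by
  by_contra h
  push_neg at h
  have hall : ∀ g : G, g = 1 ∨ g = u ∨ g = v := by
    intro g
    by_cases h1 : g = 1
    · exact Or.inl h1
    by_cases h2 : g = u
    · exact Or.inr (Or.inl h2)
    exact Or.inr (Or.inr (h g h1 h2))
  have huv : u * v = v * u := by
    by_cases hu : u = 1; · simp [hu]
    by_cases hv : v = 1; · simp [hv]
    by_cases he : u = v; · rw [he]
    rcases hall (u * v) with h' | h' | h'
    · have h2 : u⁻¹ = v := inv_eq_of_mul_eq_one_right h'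
      rw [h', ← h2, inv_mul_cancel]
    · exact absurd (by simpa using h') hv
    · exact absurd (by simpa using h') hu
  have hcomm : ∀ p q : G, p * q = q * p := by
    intro p q
    rcases hall p with hp | hp | hp <;> rcases hall q with hq | hq | hq <;>
      subst hp <;> subst hq <;> simp [huv]
  obtain ⟨x, hx⟩ := exists_ne (1 : G)
  have : x ∈ Subgroup.center G := Subgroup.mem_center_iff.mpr fun g => hcomm g x
  rw [hz, Subgroup.mem_bot] at this
  exact hx this

end Aux

namespace Monoid.CoprodI.NeWord

variable {ι : Type*} {M : ι → Type*} [∀ i, Monoid (M i)]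

lemma mulHead_last_append {i j k l : ι} (w₁ : NeWord M i j) (hne : j ≠ k)
    (w₂ : NeWord M k l) (x : M i) (h : x * (NeWord.append w₁ hne w₂).head ≠ 1) :
    (mulHead (NeWord.append w₁ hne w₂) x h).last = w₂.last := by
  simp [mulHead, replaceHead]

section Group

variable {G : ι → Type*} [∀ i, Group (G i)] [DecidableEq ι] [∀ i, DecidableEq (G i)]

lemma toWord_eq_of_prod_eq {i j i' j' : ι} {w1 : NeWord G i j} {w2 : NeWord G i' j'}
    (h : w1.prod = w2.prod) : w1.toWord = w2.toWord := by
  have h1 : Word.equiv w1.toWord.prod = w1.toWord := Word.equiv.right_inv _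
  have h2 : Word.equiv w2.toWord.prod = w2.toWord := Word.equiv.right_inv _
  rw [← h1, ← h2]
  exact congrArg _ h

lemma firstLetter_eq_of_prod_eq {i j i' j' : ι} {w1 : NeWord G i j} {w2 : NeWord G i' j'}
    (h : w1.prod = w2.prod) : (⟨i, w1.head⟩ : Σ i, G i) = ⟨i', w2.head⟩ := by
  have hw : w1.toList = w2.toList := congrArg Word.toList (toWord_eq_of_prod_eq h)
  have h2 := congrArg List.head? hw
  rw [toList_head?, toList_head?] at h2
  exact Option.some_injective _ h2

end Group

end Monoid.CoprodI.NeWord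

namespace CentralizerKey

open Monoid CoprodI

variable {H : Bool → Type*} [∀ b, Group (H b)]

lemma case_false [Nontrivial (H true)] (hz : Subgroup.center (H true) = ⊥)
    {w : CoprodI H} (hw : ∀ g : H true, CoprodI.of g * w = w * CoprodI.of g)
    {j : Bool} (W : NeWord H false j) (hW : W.prod = w) : False := by
  classical
  cases j with
  | false =>
    obtain ⟨g, hg⟩ := exists_ne (1 : H true)
    have hne : (true : Bool) ≠ false := by simp
    have hne' : (false : Bool) ≠ true := by simp
    have hLR : (NeWord.append (NeWord.singleton g hg) hne W).prod
        = (NeWord.append W hne' (NeWord.singleton g hg)).prod := by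
      rw [NeWord.append_prod, NeWord.append_prod, NeWord.prod_singleton, hW]
      exact hw g
    have hfl := NeWord.firstLetter_eq_of_prod_eq hLR
    simpa using congrArg Sigma.fst hfl
  | true =>
    obtain ⟨g, hg1, hgb, -⟩ := exists_ne_ne_ne hz W.last⁻¹ W.last⁻¹
    have hne : (true : Bool) ≠ false := by simp
    have h2 : g⁻¹ * W.inv.head ≠ 1 := by
      rw [NeWord.inv_head]
      intro h
      apply hgb
      have h3 := inv_eq_of_mul_eq_one_right h
      rw [inv_inv] at h3
      exact h3
    have hLR : (NeWord.append (NeWord.singleton g hg1) hne W).prod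
        = ((NeWord.mulHead W.inv g⁻¹ h2).inv).prod := by
      rw [NeWord.append_prod, NeWord.prod_singleton, NeWord.inv_prod, NeWord.mulHead_prod,
        NeWord.inv_prod, hW, mul_inv_rev, inv_inv, map_inv, inv_inv]
      exact hw g
    have hfl := NeWord.firstLetter_eq_of_prod_eq hLR
    simpa using congrArg Sigma.fst hfl

lemma key [Nontrivial (H true)] (hz : Subgroup.center (H true) = ⊥)
    (w : CoprodI H) (hw : ∀ g : H true, CoprodI.of g * w = w * CoprodI.of g) : w = 1 := by
  classical
  by_contra hne1
  have hemp : Word.equiv w ≠ Word.empty := by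
    intro h
    apply hne1
    have h2 := congrArg (Word.equiv (M := H)).symm h
    rw [Equiv.symm_apply_apply] at h2
    rw [h2]
    exact Word.prod_empty
  obtain ⟨i, j, W, hWeq⟩ := NeWord.of_word (Word.equiv w) hemp
  have hW : W.prod = w := by
    show W.toWord.prod = w
    rw [hWeq]
    exact Word.equiv.left_inv w
  cases i with
  | false => exact case_false hz hw W hW
  | true =>
    cases j with
    | false =>
      have hw' : ∀ g : H true, CoprodI.of g * w⁻¹ = w⁻¹ * CoprodI.of g := fun g =>
        (Commute.inv_right (hw g : Commute (CoprodI.of g) w)).eq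
      have hWi : W.inv.prod = w⁻¹ := by rw [NeWord.inv_prod, hW]
      exact case_false hz hw' W.inv hWi
    | true =>
      cases W with
      | singleton a ha =>
        apply ha
        have hcen : a ∈ Subgroup.center (H true) := by
          apply Subgroup.mem_center_iff.mpr
          intro g
          have h3 := hw g
          rw [← hW, NeWord.prod_singleton, ← map_mul, ← map_mul] at h3
          exact CoprodI.of_injective _ h3
        rwa [hz, Subgroup.mem_bot] at hcen
      | append w₁ hne12 w₂ =>
        obtain ⟨g, hg1, hga, hgb⟩ :=
          exists_ne_ne_ne hz (NeWord.append w₁ hne12 w₂).head⁻¹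
            (NeWord.append w₁ hne12 w₂).last⁻¹
        have h1 : g * (NeWord.append w₁ hne12 w₂).head ≠ 1 := fun h =>
          hga (mul_eq_one_iff_eq_inv.mp h)
        have h2 : g⁻¹ * w₂.inv.head ≠ 1 := by
          rw [NeWord.inv_head]
          intro h
          apply hgb
          have h3 := inv_eq_of_mul_eq_one_right h
          rw [inv_inv] at h3
          rw [h3]
          rfl
        have hWp : w₁.prod * w₂.prod = w := by
          rw [← NeWord.append_prod (hne := hne12)]
          exact hW
        have hLR : (NeWord.mulHead (NeWord.append w₁ hne12 w₂) g h1).prod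
            = ((NeWord.append (NeWord.mulHead w₂.inv g⁻¹ h2) hne12.symm w₁.inv).inv).prod := by
          rw [NeWord.inv_prod, NeWord.append_prod, NeWord.mulHead_prod, NeWord.mulHead_prod,
            NeWord.inv_prod, NeWord.inv_prod, hW, map_inv, mul_inv_rev, mul_inv_rev, inv_inv,
            inv_inv, inv_inv, ← mul_assoc, hWp]
          exact hw g
        have hfl := NeWord.firstLetter_eq_of_prod_eq hLR
        have hhead : (NeWord.mulHead (NeWord.append w₁ hne12 w₂) g h1).head
            = g * (NeWord.append w₁ hne12 w₂).head := NeWord.mulHead_head _ _ _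
        have hrhead : ((NeWord.append (NeWord.mulHead w₂.inv g⁻¹ h2) hne12.symm w₁.inv).inv).head
            = (NeWord.append w₁ hne12 w₂).head := by
          rw [NeWord.inv_head, NeWord.append_last, NeWord.inv_last, inv_inv]
          rfl
        rw [hhead, hrhead] at hfl
        rcases Sigma.mk.inj_iff.mp hfl with ⟨-, hheq⟩
        have heq := eq_of_heq hheq
        exact hg1 (mul_right_cancel (heq.trans (one_mul _).symm))

end CentralizerKey

section Transfer

open Monoid CoprodI

universe u

/-- The two-member family `{ULift F_n, G}` indexed by `Bool`. -/
abbrev Hfam (G : Type u) [Group G] (n : ℕ) : Bool → Type u :=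
  fun b => Bool.rec (motive := fun _ => Type u) (ULift (FreeGroup (Fin n))) G b

instance (G : Type u) [Group G] (n : ℕ) : ∀ b, Group (Hfam G n b) := fun b =>
  Bool.rec (inferInstanceAs (Group (ULift (FreeGroup (Fin n))))) (inferInstanceAs (Group G)) b

lemma coprod_centralizer_key (G : Type u) [Group G] [Nontrivial G]
    (hz : Subgroup.center G = ⊥) (n : ℕ)
    (w : Monoid.Coprod G (FreeGroup (Fin n)))
    (hcomm : ∀ g : G, Monoid.Coprod.inl g * w = w * Monoid.Coprod.inl g) : w = 1 := by
  classical
  set φ : Monoid.Coprod G (FreeGroup (Fin n)) →* CoprodI (Hfam G n) :=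
    Monoid.Coprod.lift (CoprodI.of (M := Hfam G n) (i := true))
      ((CoprodI.of (M := Hfam G n) (i := false)).comp MulEquiv.ulift.symm.toMonoidHom) with hφ
  set ψ : CoprodI (Hfam G n) →* Monoid.Coprod G (FreeGroup (Fin n)) :=
    CoprodI.lift (fun b => Bool.rec
      (motive := fun b => Hfam G n b →* Monoid.Coprod G (FreeGroup (Fin n)))
      (Monoid.Coprod.inr.comp MulEquiv.ulift.toMonoidHom) Monoid.Coprod.inl b) with hψ
  have hψφ : ψ.comp φ = MonoidHom.id _ := by
    apply Monoid.Coprod.hom_ext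
    · ext g
      simp [hφ, hψ, Monoid.Coprod.lift_apply_inl, CoprodI.lift_of]
    · ext x
      simp [hφ, hψ, Monoid.Coprod.lift_apply_inr, CoprodI.lift_of]
  have hφw : φ w = 1 := by
    apply CentralizerKey.key (H := Hfam G n) (hz : Subgroup.center (Hfam G n true) = ⊥)
    intro g
    have h2 := congrArg φ (hcomm g)
    rw [map_mul, map_mul] at h2
    have h3 : φ (Monoid.Coprod.inl g) = CoprodI.of (i := true) g := by
      rw [hφ, Monoid.Coprod.lift_apply_inl]
    rwa [h3] at h2
  have h4 := DFunLike.congr_fun hψφ w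
  rw [MonoidHom.comp_apply, hφw, map_one, MonoidHom.id_apply] at h4
  exact h4.symm

end Transfer

/-- For `G` a nontrivial group with trivial center and `n ≥ 1`: if conjugation by
`w ∈ G ∗ F_n` fixes `inl(G)` pointwise (i.e. is a `G`-automorphism), then `w = 1`;
equivalently, the centralizer of `inl(G)` in `G ∗ F_n` is trivial, so the inner
automorphisms meet `Aut_G(G ∗ F_n)` trivially and the subgroup of
`Aut(G ∗ F_n)` they generate is the internal semidirect product
`Inn(G ∗ F_n) ⋊ Aut_G(G ∗ F_n)`. -/
theorem conj_gAut_trivial (G : Type*) [Group G] [Nontrivial G]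
    (hz : Subgroup.center G = ⊥) (n : ℕ) (hn : 1 ≤ n) :
    (∀ w : Monoid.Coprod G (FreeGroup (Fin n)),
        MulAut.conj w ∈ gAut G n → w = 1) ∧
    Subgroup.centralizer
      (Set.range (Monoid.Coprod.inl : G →* Monoid.Coprod G (FreeGroup (Fin n)))) = ⊥ ∧
    (MulAut.conj :
        Monoid.Coprod G (FreeGroup (Fin n)) →*
          MulAut (Monoid.Coprod G (FreeGroup (Fin n)))).range ⊓ gAut G n = ⊥ := by
  have part1 : ∀ w : Monoid.Coprod G (FreeGroup (Fin n)),
      MulAut.conj w ∈ gAut G n → w = 1 := by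
    intro w hw
    apply coprod_centralizer_key G hz n
    intro g
    have h1 : MulAut.conj w (Monoid.Coprod.inl g) = Monoid.Coprod.inl g := hw g
    rw [MulAut.conj_apply] at h1
    rw [← mul_inv_eq_iff_eq_mul.mp h1]
  refine ⟨part1, ?_, ?_⟩
  · rw [Subgroup.eq_bot_iff_forall]
    intro w hw
    apply coprod_centralizer_key G hz n
    intro g
    exact Subgroup.mem_centralizer_iff.mp hw _ ⟨g, rfl⟩
  · rw [Subgroup.eq_bot_iff_forall]
    intro α hα
    rw [Subgroup.mem_inf] at hα
    obtain ⟨⟨w, rfl⟩, hg⟩ := hα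
    rw [part1 w hg, map_one]
end
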